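/- arXiv:1802.02456 — 7 statements merged into one kernel-verified Lean document; each statement's English description precedes it below -/
import Mathlib

section
/- Assume n ≥ 1, m ≥ 0, 2n > d and m ≤ 2n + d − 1. For all r, u ∈ O_E, the element P_r := 1 + εⁿπ^{2n}·r·τ(r) of O_E satisfies: (a) τ(P_r) = P_r; (b) P_r − (1 + εⁿπ^{2n}r²) ∈ p_E^{m+1}; (c) P_r² − 1 ∈ p_E^{m+1} (so that P_r⁻¹ − P_r ∈ p_E^{m+1}); and (d) P_r·P_u − P_{r+u} ∈ p_E^{m+1}. -/
open Matrix

noncomputable section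

namespace ADLV

variable {E : Type*} [Field E]

/-- `e₋(a)`, the lower unipotent matrix. -/
def em (a : E) : Matrix (Fin 2) (Fin 2) E := !![1, 0; a, 1]

/-- `e₊(a)`, the upper unipotent matrix. -/
def ep (a : E) : Matrix (Fin 2) (Fin 2) E := !![1, a; 0, 1]

/-- `e₀(c, c')`, the diagonal matrix. -/
def e0 (c c' : E) : Matrix (Fin 2) (Fin 2) E := !![c, 0; 0, c']

/-- The congruence subgroup `I_E^r`, as a set of matrices. -/
def IEr (v : E → WithTop ℤ) (r : ℤ) : Set (Matrix (Fin 2) (Fin 2) E) :=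
  {g | (((r + 1) / 2 : ℤ) : WithTop ℤ) ≤ v (g 0 0 - 1) ∧
    ((r / 2 : ℤ) : WithTop ℤ) ≤ v (g 0 1) ∧
    ((r / 2 + 1 : ℤ) : WithTop ℤ) ≤ v (g 1 0) ∧
    (((r + 1) / 2 : ℤ) : WithTop ℤ) ≤ v (g 1 1 - 1)}

/-- The Iwahori subgroup `I_E`, as a set of matrices. -/
def IwE (v : E → WithTop ℤ) : Set (Matrix (Fin 2) (Fin 2) E) :=
  {g | v (g 0 0) = 0 ∧ (0 : WithTop ℤ) ≤ v (g 0 1) ∧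
    (1 : WithTop ℤ) ≤ v (g 1 0) ∧ v (g 1 1) = 0}

/-- `P_r = 1 + εⁿ π^{2n} r τ(r)`. -/
def Pel (τ : E →+* E) (ε π : E) (n : ℤ) (r : E) : E := 1 + ε ^ n * π ^ (2 * n) * r * τ r

/-- `i(t, r) = e₊(r) e₋(εⁿ π^{2n} τ(r) P_r⁻¹) e₀(t, τ(t) P_r⁻¹)`. -/
def imat (τ : E →+* E) (ε π : E) (n : ℤ) (t r : E) : Matrix (Fin 2) (Fin 2) E :=
  ep r * em (ε ^ n * π ^ (2 * n) * τ r * (Pel τ ε π n r)⁻¹) * e0 t (τ t * (Pel τ ε π n r)⁻¹)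

/-- The element `ẇ`. -/
def wdot (ε π : E) (n : ℤ) : Matrix (Fin 2) (Fin 2) E :=
  !![0, π ^ (-n); π ^ n, 0] * e0 (ε ^ (n / 2)) (ε ^ (-((n + 1) / 2)))

/-- The element `v̇`. -/
def vdot (π : E) (n d : ℤ) : Matrix (Fin 2) (Fin 2) E :=
  !![0, π ^ (-((d + 1) / 2 + (n + 1) / 2)); π ^ ((d + 1) / 2 + n / 2), 0]

/-- `ι(c₀ + c₁ π)`, the embedding of `E` into `Mat₂(F)` on the element `c₀ + c₁ π`, `c₀, c₁ ∈ F`. -/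
def iota (Δ ϖ : E) (c₀ c₁ : E) : Matrix (Fin 2) (Fin 2) E := !![c₀ + Δ * c₁, c₁; ϖ * c₁, c₀]

theorem statement1 [CharP E 2]
    (τ : E →+* E) (hττ : ∀ x : E, τ (τ x) = x) (hτne : τ ≠ RingHom.id E)
    (v : E → WithTop ℤ)
    (hv_top : ∀ x : E, v x = ⊤ ↔ x = 0)
    (hv_mul : ∀ x y : E, v (x * y) = v x + v y)
    (hv_add : ∀ x y : E, min (v x) (v y) ≤ v (x + y))
    (hv_tau : ∀ x : E, v (τ x) = v x)
    (π : E) (hπ : v π = 1)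
    (hv_even : ∀ x : E, τ x = x → ∀ k : ℤ, v x = (k : WithTop ℤ) → Even k)
    (hbasis : ∀ y : E, ∃ c₀ c₁ : E, τ c₀ = c₀ ∧ τ c₁ = c₁ ∧ y = c₀ + c₁ * π)
    (d : ℤ) (hd : 0 < d) (hdodd : Odd d)
    (ε : E) (hε : ε = τ π / π)
    (hεd : v (ε - 1) = (d : WithTop ℤ))
    (n m : ℤ) (hn : 1 ≤ n) (hm : 0 ≤ m) (h2n : d < 2 * n) (hmb : m ≤ 2 * n + d - 1)
    (r u : E) (hr : (0 : WithTop ℤ) ≤ v r) (hu : (0 : WithTop ℤ) ≤ v u) :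
    τ (Pel τ ε π n r) = Pel τ ε π n r ∧
    ((m + 1 : ℤ) : WithTop ℤ) ≤ v (Pel τ ε π n r - (1 + ε ^ n * π ^ (2 * n) * r ^ 2)) ∧
    ((m + 1 : ℤ) : WithTop ℤ) ≤ v (Pel τ ε π n r ^ 2 - 1) ∧
    ((m + 1 : ℤ) : WithTop ℤ) ≤ v ((Pel τ ε π n r)⁻¹ - Pel τ ε π n r) ∧
    ((m + 1 : ℤ) : WithTop ℤ) ≤ v (Pel τ ε π n r * Pel τ ε π n u - Pel τ ε π n (r + u)) := by
  classical
  -- basic facts about the valuation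
  have hvne_top : ∀ x : E, x ≠ 0 → v x ≠ ⊤ := fun x hx h => hx ((hv_top x).1 h)
  have hne_of_v : ∀ x : E, v x ≠ ⊤ → x ≠ 0 := fun x h hx => h ((hv_top x).2 hx)
  have h2 : (2 : E) = 0 := CharTwo.two_eq_zero
  have hv1 : v (1 : E) = 0 := by
    have h := hv_mul 1 1
    rw [one_mul] at h
    have h1 : v (1 : E) ≠ ⊤ := hvne_top 1 one_ne_zero
    lift v (1 : E) to ℤ using h1 with a ha
    have h3 : a = a + a := by exact_mod_cast h
    have h4 : a = 0 := by omega
    exact_mod_cast h4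
  have hπ0 : π ≠ 0 := hne_of_v π (by simp [hπ])
  have hτπv : v (τ π) = 1 := by rw [hv_tau, hπ]
  have hτπ0 : τ π ≠ 0 := hne_of_v _ (by simp [hτπv])
  have hε0 : ε ≠ 0 := by rw [hε]; exact div_ne_zero hτπ0 hπ0
  have hτπε : τ π = ε * π := by rw [hε]; field_simp
  have hvε : v ε = 0 := by
    have h := hv_mul ε π
    rw [← hτπε, hτπv, hπ] at h
    have hεt : v ε ≠ ⊤ := hvne_top ε hε0
    lift v ε to ℤ using hεt with a ha
    have h3 : (1 : ℤ) = a + 1 := by exact_mod_cast h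
    have h4 : a = 0 := by omega
    exact_mod_cast h4
  have hτε : τ ε = ε⁻¹ := by rw [hε, map_div₀, hττ, inv_div]
  -- valuation of powers
  have hvpow : ∀ (x : E) (c : ℤ), v x = (c : WithTop ℤ) →
      ∀ k : ℕ, v (x ^ k) = ((k * c : ℤ) : WithTop ℤ) := by
    intro x c hx k
    induction k with
    | zero => simpa using hv1
    | succ k ih =>
      rw [pow_succ, hv_mul, ih, hx, ← WithTop.coe_add]
      congr 1
      push_cast
      ring
  have hvzpow : ∀ (x : E) (c : ℤ), v x = (c : WithTop ℤ) →
      ∀ k : ℤ, v (x ^ k) = ((k * c : ℤ) : WithTop ℤ) := by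
    intro x c hx k
    have hx0 : x ≠ 0 := hne_of_v x (by rw [hx]; exact WithTop.coe_ne_top)
    rcases le_or_gt 0 k with hk | hk
    · lift k to ℕ using hk
      rw [zpow_natCast]
      exact_mod_cast hvpow x c hx k
    · have hk' : (0 : ℤ) ≤ -k := by omega
      have h1 : x ^ k * x ^ (-k) = 1 := by rw [← zpow_add₀ hx0]; simp
      have h2' : v (x ^ (-k)) = ((-k * c : ℤ) : WithTop ℤ) := by
        have he : x ^ (-k) = x ^ ((-k).toNat : ℕ) := by
          rw [← zpow_natCast, Int.toNat_of_nonneg hk']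
        rw [he, hvpow x c hx]
        congr 1
        rw [Int.toNat_of_nonneg hk']
      have h3 := hv_mul (x ^ k) (x ^ (-k))
      rw [h1, hv1, h2'] at h3
      lift v (x ^ k) to ℤ using hvne_top _ (zpow_ne_zero _ hx0) with a ha
      have h4 : (0 : ℤ) = a + (-k * c) := by exact_mod_cast h3
      have h5 : a = k * c := by linarith
      exact_mod_cast h5
  -- ultrametric: dominant term
  have hlt : ∀ a b : E, v a < v b → v (a + b) = v a := by
    intro a b hab
    refine le_antisymm ?_ (le_trans (le_min le_rfl hab.le) (hv_add a b))
    by_contra hcon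
    push_neg at hcon
    have hb : a + b + b = a := by rw [add_assoc, CharTwo.add_self_eq_zero, add_zero]
    have hmin := hv_add (a + b) b
    rw [hb] at hmin
    rcases min_le_iff.mp hmin with h | h
    · exact absurd h (not_le.mpr hcon)
    · exact absurd h (not_le.mpr hab)
  -- key lemma: v (x + τ x) ≥ d + 1 for integral x
  have hkey : ∀ x : E, (0 : WithTop ℤ) ≤ v x → ((d + 1 : ℤ) : WithTop ℤ) ≤ v (x + τ x) := by
    intro x hx
    obtain ⟨c₀, c₁, h0, h1, hxx⟩ := hbasis x
    have hsum : x + τ x = c₁ * (π * (ε - 1)) := by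
      rw [hxx, map_add, _root_.map_mul, h0, h1, hτπε]
      linear_combination (c₀ + c₁ * π) * h2
    by_cases hc1 : c₁ = 0
    · rw [hsum, hc1, zero_mul, (hv_top 0).2 rfl]
      exact le_top
    · have hc1t : v c₁ ≠ ⊤ := hvne_top _ hc1
      lift v c₁ to ℤ using hc1t with k hk
      have hkeven : Even k := hv_even c₁ h1 k hk.symm
      have hvsum : v (x + τ x) = ((k + 1 + d : ℤ) : WithTop ℤ) := by
        rw [hsum, hv_mul, hv_mul, ← hk, hπ, hεd]
        push_cast
        exact (add_assoc _ _ _).symm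
      have hk0 : 0 ≤ k := by
        by_contra hneg
        push_neg at hneg
        have hvc1π : v (c₁ * π) = ((k + 1 : ℤ) : WithTop ℤ) := by
          rw [hv_mul, ← hk, hπ]
          push_cast
          rfl
        have hne0 : v c₀ ≠ v (c₁ * π) := by
          rw [hvc1π]
          intro he
          have heven : Even (k + 1) := hv_even c₀ h0 (k + 1) he
          rcases hkeven with ⟨j, hj⟩
          rcases heven with ⟨i, hi⟩
          omega
        have hxle : v x ≤ ((k + 1 : ℤ) : WithTop ℤ) := by
          rcases lt_or_gt_of_ne hne0 with hlt' | hlt'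
          · rw [hxx, hlt c₀ (c₁ * π) hlt']
            exact le_of_lt (lt_of_lt_of_le hlt' (le_of_eq hvc1π))
          · have hxeq : v x = v (c₁ * π) := by
              rw [hxx, add_comm]
              exact hlt (c₁ * π) c₀ hlt'
            rw [hxeq, hvc1π]
        have hle0 : (0 : WithTop ℤ) ≤ ((k + 1 : ℤ) : WithTop ℤ) := le_trans hx hxle
        have hle0' : (0 : ℤ) ≤ k + 1 := by exact_mod_cast hle0
        rcases hkeven with ⟨j, hj⟩
        omega
      rw [hvsum]
      exact_mod_cast (by omega : d + 1 ≤ k + 1 + d)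
  -- valuations of the basic quantities
  have hvεn : ∀ k : ℤ, v (ε ^ k) = ((0 : ℤ) : WithTop ℤ) := by
    intro k
    rw [hvzpow ε 0 (by exact_mod_cast hvε) k]
    norm_num
  have hva : v (ε ^ n * π ^ (2 * n)) = ((2 * n : ℤ) : WithTop ℤ) := by
    rw [hv_mul, hvεn n, hvzpow π 1 (by exact_mod_cast hπ) (2 * n)]
    push_cast
    simp
  have hvge : ∀ (x y : E) (k l : ℤ), ((k : ℤ) : WithTop ℤ) ≤ v x →
      ((l : ℤ) : WithTop ℤ) ≤ v y → ((k + l : ℤ) : WithTop ℤ) ≤ v (x * y) := by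
    intro x y k l hk hl
    rw [hv_mul]
    push_cast
    exact add_le_add hk hl
  have hr0 : ((0 : ℤ) : WithTop ℤ) ≤ v r := by exact_mod_cast hr
  have hu0 : ((0 : ℤ) : WithTop ℤ) ≤ v u := by exact_mod_cast hu
  have hvxr : ((2 * n : ℤ) : WithTop ℤ) ≤ v (ε ^ n * π ^ (2 * n) * r * τ r) := by
    have h1' := hvge _ r (2 * n) 0 (le_of_eq hva.symm) hr0
    have h2' := hvge _ (τ r) (2 * n + 0) 0 h1' (by rw [hv_tau]; exact hr0)
    refine le_trans ?_ h2'
    exact_mod_cast (by omega : 2 * n ≤ 2 * n + 0 + 0)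
  have hvxu : ((2 * n : ℤ) : WithTop ℤ) ≤ v (ε ^ n * π ^ (2 * n) * u * τ u) := by
    have h1' := hvge _ u (2 * n) 0 (le_of_eq hva.symm) hu0
    have h2' := hvge _ (τ u) (2 * n + 0) 0 h1' (by rw [hv_tau]; exact hu0)
    refine le_trans ?_ h2'
    exact_mod_cast (by omega : 2 * n ≤ 2 * n + 0 + 0)
  -- part (a)
  have parta : τ (Pel τ ε π n r) = Pel τ ε π n r := by
    simp only [Pel, map_add, _root_.map_one, _root_.map_mul, map_zpow₀, hττ, hτε, hτπε]
    rw [_root_.mul_zpow, _root_.inv_zpow, ← _root_.zpow_neg]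
    have hee : ε ^ (-n) * (ε ^ (2 * n) * π ^ (2 * n)) = ε ^ n * π ^ (2 * n) := by
      rw [← mul_assoc, ← zpow_add₀ hε0]
      have he2 : -n + 2 * n = n := by ring
      rw [he2]
    rw [hee]
    ring
  -- part (b)
  have hb_eq : Pel τ ε π n r - (1 + ε ^ n * π ^ (2 * n) * r ^ 2)
      = ε ^ n * π ^ (2 * n) * (r * (r + τ r)) := by
    simp only [Pel]
    linear_combination (-(ε ^ n * π ^ (2 * n) * r ^ 2)) * h2
  have partb : ((m + 1 : ℤ) : WithTop ℤ) ≤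
      v (Pel τ ε π n r - (1 + ε ^ n * π ^ (2 * n) * r ^ 2)) := by
    rw [hb_eq]
    have h1' := hvge r (r + τ r) 0 (d + 1) hr0 (by exact_mod_cast hkey r (by exact_mod_cast hr0))
    have h2' := hvge _ _ (2 * n) (0 + (d + 1)) (le_of_eq hva.symm) h1'
    refine le_trans ?_ h2'
    exact_mod_cast (by omega : m + 1 ≤ 2 * n + (0 + (d + 1)))
  -- part (c)
  have hc_eq : Pel τ ε π n r ^ 2 - 1 = (ε ^ n * π ^ (2 * n) * r * τ r) ^ 2 := by
    simp only [Pel]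
    linear_combination (ε ^ n * π ^ (2 * n) * r * τ r) * h2
  have partc : ((m + 1 : ℤ) : WithTop ℤ) ≤ v (Pel τ ε π n r ^ 2 - 1) := by
    rw [hc_eq, sq]
    refine le_trans ?_ (hvge _ _ (2 * n) (2 * n) hvxr hvxr)
    exact_mod_cast (by omega : m + 1 ≤ 2 * n + 2 * n)
  -- part (d)
  have hvP : v (Pel τ ε π n r) = 0 := by
    have hlt1 : v (1 : E) < v (ε ^ n * π ^ (2 * n) * r * τ r) := by
      rw [hv1]
      exact lt_of_lt_of_le (by exact_mod_cast (by omega : (0 : ℤ) < 2 * n)) hvxr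
    have h' := hlt 1 _ hlt1
    rw [hv1] at h'
    exact h'
  have hP0 : Pel τ ε π n r ≠ 0 := hne_of_v _ (by rw [hvP]; simp)
  have hvPinv : v ((Pel τ ε π n r)⁻¹) = 0 := by
    have h' := hv_mul (Pel τ ε π n r)⁻¹ (Pel τ ε π n r)
    rw [inv_mul_cancel₀ hP0, hv1, hvP, add_zero] at h'
    exact h'.symm
  have hd_eq : (Pel τ ε π n r)⁻¹ - Pel τ ε π n r
      = (Pel τ ε π n r)⁻¹ * (Pel τ ε π n r ^ 2 - 1) := by
    field_simp
    linear_combination (1 - Pel τ ε π n r ^ 2) * h2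
  have partd : ((m + 1 : ℤ) : WithTop ℤ) ≤ v ((Pel τ ε π n r)⁻¹ - Pel τ ε π n r) := by
    rw [hd_eq, hv_mul, hvPinv, zero_add]
    exact partc
  -- part (e)
  have he_eq : Pel τ ε π n r * Pel τ ε π n u - Pel τ ε π n (r + u)
      = (ε ^ n * π ^ (2 * n) * r * τ r) * (ε ^ n * π ^ (2 * n) * u * τ u)
        + ε ^ n * π ^ (2 * n) * (r * τ u + τ (r * τ u)) := by
    simp only [Pel, map_add, _root_.map_mul, hττ]
    linear_combination (-(ε ^ n * π ^ (2 * n)) * (r * τ u + τ r * u)) * h2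
  have parte : ((m + 1 : ℤ) : WithTop ℤ) ≤
      v (Pel τ ε π n r * Pel τ ε π n u - Pel τ ε π n (r + u)) := by
    rw [he_eq]
    have hX : ((m + 1 : ℤ) : WithTop ℤ) ≤
        v ((ε ^ n * π ^ (2 * n) * r * τ r) * (ε ^ n * π ^ (2 * n) * u * τ u)) := by
      refine le_trans ?_ (hvge _ _ (2 * n) (2 * n) hvxr hvxu)
      exact_mod_cast (by omega : m + 1 ≤ 2 * n + 2 * n)
    have hrτu : ((0 : ℤ) : WithTop ℤ) ≤ v (r * τ u) := by
      have := hvge r (τ u) 0 0 hr0 (by rw [hv_tau]; exact hu0)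
      simpa using this
    have hY : ((m + 1 : ℤ) : WithTop ℤ) ≤
        v (ε ^ n * π ^ (2 * n) * (r * τ u + τ (r * τ u))) := by
      refine le_trans ?_ (hvge _ _ (2 * n) (d + 1) (le_of_eq hva.symm)
        (by exact_mod_cast hkey _ (by exact_mod_cast hrτu)))
      exact_mod_cast (by omega : m + 1 ≤ 2 * n + (d + 1))
    exact le_trans (le_min hX hY) (hv_add _ _)
  exact ⟨parta, partb, partc, partd, parte⟩

end ADLV
end
end

section
/- Assume n ≥ 1, m ≥ 0, 2n > d and m ≤ 2n + d − 1. For every r ∈ O_E there exist j, j′ ∈ I_E^{2m+1} such that i(1,r) = P_r·[[1, r],[εⁿπ^{2n}r, 1]]·j and i(1,r)⁻¹ = [[1, r],[εⁿπ^{2n}r, 1]]·j′, where [[1, r],[εⁿπ^{2n}r, 1]] denotes the 2×2 matrix with rows (1, r) and (εⁿπ^{2n}r, 1). -/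
namespace ADLVAux

variable {E : Type*} [Field E]

section Val
variable (v : E → WithTop ℤ)
  (hv_top : ∀ x : E, v x = ⊤ ↔ x = 0)
  (hv_mul : ∀ x y : E, v (x * y) = v x + v y)

include hv_top hv_mul

lemma v_one : v 1 = 0 := by
  have h := hv_mul 1 1
  rw [mul_one] at h
  have h1 : v 1 ≠ ⊤ := by simp [hv_top]
  obtain ⟨a, ha⟩ := WithTop.ne_top_iff_exists.mp h1
  rw [← ha] at h ⊢
  rw [← WithTop.coe_add, WithTop.coe_eq_coe] at h
  have : a = 0 := by omega
  simp [this]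

omit hv_mul in
lemma v_ne_top (x : E) (hx : x ≠ 0) : v x ≠ ⊤ := by simp [hv_top, hx]

lemma v_inv (x : E) (hx : x ≠ 0) (c : ℤ) (hc : v x = (c : WithTop ℤ)) :
    v x⁻¹ = ((-c : ℤ) : WithTop ℤ) := by
  have h := hv_mul x⁻¹ x
  rw [inv_mul_cancel₀ hx, v_one v hv_top hv_mul, hc] at h
  have hne : v x⁻¹ ≠ ⊤ := v_ne_top v hv_top _ (inv_ne_zero hx)
  obtain ⟨a, ha⟩ := WithTop.ne_top_iff_exists.mp hne
  rw [← ha] at h ⊢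
  rw [← WithTop.coe_add, eq_comm, WithTop.coe_eq_zero] at h
  have : a = -c := by omega
  simp [this]

lemma v_pow (x : E) (c : ℤ) (hc : v x = (c : WithTop ℤ)) (k : ℕ) :
    v (x ^ k) = ((k * c : ℤ) : WithTop ℤ) := by
  induction k with
  | zero => simpa using v_one v hv_top hv_mul
  | succ k ih =>
      rw [pow_succ, hv_mul, ih, hc, ← WithTop.coe_add]
      congr 1
      push_cast
      ring

lemma v_zpow (x : E) (c : ℤ) (hc : v x = (c : WithTop ℤ)) (k : ℤ) (hk : 0 ≤ k) :
    v (x ^ k) = ((k * c : ℤ) : WithTop ℤ) := by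
  obtain ⟨k, rfl⟩ := Int.eq_ofNat_of_zero_le hk
  rw [zpow_natCast]
  exact v_pow v hv_top hv_mul x c hc k

omit hv_top in
lemma v_mul_ge (x y : E) (a b : ℤ) (hx : (a : WithTop ℤ) ≤ v x) (hy : (b : WithTop ℤ) ≤ v y) :
    ((a + b : ℤ) : WithTop ℤ) ≤ v (x * y) := by
  rw [hv_mul, WithTop.coe_add]
  exact add_le_add hx hy

end Val

lemma v_ge_trans (v : E → WithTop ℤ) (a b : ℤ) (h : a ≤ b) (x : E)
    (hx : (b : WithTop ℤ) ≤ v x) : (a : WithTop ℤ) ≤ v x :=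
  le_trans (WithTop.coe_le_coe.mpr h) hx

lemma v_add_ge (v : E → WithTop ℤ) (hv_add : ∀ x y : E, min (v x) (v y) ≤ v (x + y))
    (x y : E) (a : ℤ) (hx : (a : WithTop ℤ) ≤ v x) (hy : (a : WithTop ℤ) ≤ v y) :
    (a : WithTop ℤ) ≤ v (x + y) :=
  le_trans (le_min hx hy) (hv_add x y)

lemma v_add_eq [CharP E 2] (v : E → WithTop ℤ)
    (hv_add : ∀ x y : E, min (v x) (v y) ≤ v (x + y))
    (x y : E) (h : v x < v y) : v (x + y) = v x := by
  have h1 : v x ≤ v (x + y) := le_trans (by simp [le_of_lt h]) (hv_add x y)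
  have hxy : (x + y) + y = x := by
    rw [add_assoc, CharTwo.add_self_eq_zero, add_zero]
  have h2 := hv_add (x + y) y
  rw [hxy] at h2
  refine le_antisymm ?_ h1
  rcases le_or_gt (v (x + y)) (v y) with hc | hc
  · calc v (x + y) = min (v (x + y)) (v y) := (min_eq_left hc).symm
      _ ≤ v x := h2
  · exfalso
    rw [min_eq_right (le_of_lt hc)] at h2
    exact absurd (lt_of_lt_of_le h h2) (lt_irrefl _)

end ADLVAux



open Matrix

noncomputable section

namespace ADLV

variable {E : Type*} [Field E]

theorem statement2 [CharP E 2]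
    (τ : E →+* E) (hττ : ∀ x : E, τ (τ x) = x) (hτne : τ ≠ RingHom.id E)
    (v : E → WithTop ℤ)
    (hv_top : ∀ x : E, v x = ⊤ ↔ x = 0)
    (hv_mul : ∀ x y : E, v (x * y) = v x + v y)
    (hv_add : ∀ x y : E, min (v x) (v y) ≤ v (x + y))
    (hv_tau : ∀ x : E, v (τ x) = v x)
    (π : E) (hπ : v π = 1)
    (hv_even : ∀ x : E, τ x = x → ∀ k : ℤ, v x = (k : WithTop ℤ) → Even k)
    (hbasis : ∀ y : E, ∃ c₀ c₁ : E, τ c₀ = c₀ ∧ τ c₁ = c₁ ∧ y = c₀ + c₁ * π)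
    (d : ℤ) (hd : 0 < d) (hdodd : Odd d)
    (ε : E) (hε : ε = τ π / π)
    (hεd : v (ε - 1) = (d : WithTop ℤ))
    (n m : ℤ) (hn : 1 ≤ n) (hm : 0 ≤ m) (h2n : d < 2 * n) (hmb : m ≤ 2 * n + d - 1)
    (r : E) (hr : (0 : WithTop ℤ) ≤ v r) :
    ∃ j j' : Matrix (Fin 2) (Fin 2) E, j ∈ IEr v (2 * m + 1) ∧ j' ∈ IEr v (2 * m + 1) ∧
      imat τ ε π n 1 r = Pel τ ε π n r • !![(1 : E), r; ε ^ n * π ^ (2 * n) * r, 1] * j ∧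
      (imat τ ε π n 1 r)⁻¹ = !![(1 : E), r; ε ^ n * π ^ (2 * n) * r, 1] * j' := by
  have h2 : (2 : E) = 0 := by exact_mod_cast CharP.cast_eq_zero E 2
  have hπ0 : π ≠ 0 := by
    intro h
    have h1 := (hv_top π).mpr h
    rw [hπ] at h1
    exact absurd h1 (by simp)
  have hτπ : τ π = ε * π := by rw [hε]; field_simp
  have hτπ0 : τ π ≠ 0 := by
    intro h
    have h1 := hv_tau π
    rw [h, (hv_top 0).mpr rfl, hπ] at h1
    exact absurd h1.symm (by simp)
  have hε0 : ε ≠ 0 := by rw [hε]; exact div_ne_zero hτπ0 hπ0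
  have hπ1 : v π = ((1 : ℤ) : WithTop ℤ) := by exact_mod_cast hπ
  have hr' : ((0 : ℤ) : WithTop ℤ) ≤ v r := by exact_mod_cast hr
  have hvt : ((0 : ℤ) : WithTop ℤ) ≤ v (τ r) := by rw [hv_tau]; exact hr'
  have hv0top : v 0 = ⊤ := (hv_top 0).mpr rfl
  have hvε : v ε = ((0 : ℤ) : WithTop ℤ) := by
    have h := hv_mul ε π
    rw [← hτπ, hv_tau, hπ1] at h
    obtain ⟨a, ha⟩ := WithTop.ne_top_iff_exists.mp (ADLVAux.v_ne_top v hv_top ε hε0)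
    rw [← ha] at h ⊢
    rw [← WithTop.coe_add, WithTop.coe_eq_coe] at h
    have : a = 0 := by omega
    simp [this]
  have hvεn : v (ε ^ n) = ((0 : ℤ) : WithTop ℤ) := by
    have h := ADLVAux.v_zpow v hv_top hv_mul ε 0 hvε n (by omega)
    rw [show n * (0 : ℤ) = 0 by ring] at h
    exact h
  have hvπ2n : v (π ^ (2 * n)) = ((2 * n : ℤ) : WithTop ℤ) := by
    have h := ADLVAux.v_zpow v hv_top hv_mul π 1 hπ1 (2 * n) (by omega)
    rw [show 2 * n * (1 : ℤ) = 2 * n by ring] at h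
    exact h
  set s := ε ^ n * π ^ (2 * n) with hs
  set t := τ r with ht
  have hvs : v s = ((2 * n : ℤ) : WithTop ℤ) := by
    rw [hs, hv_mul, hvεn, hvπ2n, ← WithTop.coe_add]
    norm_num
  -- bound on r + τ r
  have hvrt : ((1 + d : ℤ) : WithTop ℤ) ≤ v (r + t) := by
    obtain ⟨c₀, c₁, h0, h1, hy⟩ := hbasis r
    have hkey : r + t = c₁ * (π * (ε - 1)) := by
      rw [ht, hy, map_add, _root_.map_mul, h0, h1, hτπ]
      linear_combination (c₀ + c₁ * π) * h2
    rw [hkey]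
    rcases eq_or_ne c₁ 0 with hc | hc
    · rw [hc, zero_mul, hv0top]; exact le_top
    · have hvc1 : ((0 : ℤ) : WithTop ℤ) ≤ v c₁ := by
        by_contra hneg
        push_neg at hneg
        obtain ⟨k, hk⟩ := WithTop.ne_top_iff_exists.mp (ADLVAux.v_ne_top v hv_top c₁ hc)
        rw [← hk] at hneg
        have hklt : k < 0 := by exact_mod_cast hneg
        have hkeven : Even k := hv_even c₁ h1 k hk.symm
        obtain ⟨a, hae⟩ := hkeven
        have hvc1π : v (c₁ * π) = ((k + 1 : ℤ) : WithTop ℤ) := by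
          rw [hv_mul, ← hk, hπ1, ← WithTop.coe_add]
        have hrneg : ¬ ((0 : ℤ) : WithTop ℤ) ≤ v r := by
          rw [hy]
          rcases eq_or_ne c₀ 0 with hc0 | hc0
          · rw [hc0, zero_add, hvc1π]
            intro hcon
            have : (0 : ℤ) ≤ k + 1 := by exact_mod_cast hcon
            omega
          · obtain ⟨k₀, hk₀⟩ := WithTop.ne_top_iff_exists.mp (ADLVAux.v_ne_top v hv_top c₀ hc0)
            have hk₀even : Even k₀ := hv_even c₀ h0 k₀ hk₀.symm
            obtain ⟨b, hbe⟩ := hk₀even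
            rcases lt_trichotomy k₀ (k + 1) with hlt | heq | hgt
            · have : v (c₀ + c₁ * π) = ((k₀ : ℤ) : WithTop ℤ) := by
                rw [ADLVAux.v_add_eq v hv_add c₀ (c₁ * π) (by rw [← hk₀, hvc1π]; exact_mod_cast hlt), hk₀]
              rw [this]
              intro hcon
              have : (0 : ℤ) ≤ k₀ := by exact_mod_cast hcon
              omega
            · omega
            · have : v (c₀ + c₁ * π) = ((k + 1 : ℤ) : WithTop ℤ) := by
                rw [add_comm, ADLVAux.v_add_eq v hv_add (c₁ * π) c₀ (by rw [← hk₀, hvc1π]; exact_mod_cast hgt)]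
                exact hvc1π
              rw [this]
              intro hcon
              have : (0 : ℤ) ≤ k + 1 := by exact_mod_cast hcon
              omega
        exact hrneg hr'
      have hb : ((0 + (1 + d) : ℤ) : WithTop ℤ) ≤ v (c₁ * (π * (ε - 1))) := by
        refine ADLVAux.v_mul_ge v hv_mul _ _ _ _ hvc1 ?_
        have := ADLVAux.v_mul_ge v hv_mul π (ε - 1) 1 d (le_of_eq hπ1.symm) (le_of_eq hεd.symm)
        exact this
      exact ADLVAux.v_ge_trans v _ _ (by omega) _ hb
  -- nonvanishing of P and Q
  have hX : ((2 * n : ℤ) : WithTop ℤ) ≤ v (s * r * t) := by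
    have h1 := ADLVAux.v_mul_ge v hv_mul s r (2 * n) 0 (le_of_eq hvs.symm) hr'
    have h3 := ADLVAux.v_mul_ge v hv_mul (s * r) t (2 * n + 0) 0 h1 hvt
    exact ADLVAux.v_ge_trans v _ _ (by omega) _ h3
  have hY : ((2 * n : ℤ) : WithTop ℤ) ≤ v (s * r * r) := by
    have h1 := ADLVAux.v_mul_ge v hv_mul s r (2 * n) 0 (le_of_eq hvs.symm) hr'
    have h3 := ADLVAux.v_mul_ge v hv_mul (s * r) r (2 * n + 0) 0 h1 hr'
    exact ADLVAux.v_ge_trans v _ _ (by omega) _ h3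
  have hone : v (1 : E) = ((0 : ℤ) : WithTop ℤ) := by
    simpa using ADLVAux.v_one v hv_top hv_mul
  have vP : v (1 + s * r * t) = ((0 : ℤ) : WithTop ℤ) := by
    rw [ADLVAux.v_add_eq v hv_add 1 (s * r * t)
      (by rw [hone]; exact lt_of_lt_of_le (by exact_mod_cast (by omega : (0:ℤ) < 2*n)) hX)]
    exact hone
  have hP0 : (1 + s * r * t) ≠ 0 := by
    intro h
    rw [h, hv0top] at vP
    exact absurd vP (by simp)
  have vQ : v (1 + s * r * r) = ((0 : ℤ) : WithTop ℤ) := by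
    rw [ADLVAux.v_add_eq v hv_add 1 (s * r * r)
      (by rw [hone]; exact lt_of_lt_of_le (by exact_mod_cast (by omega : (0:ℤ) < 2*n)) hY)]
    exact hone
  have hQ0 : (1 + s * r * r) ≠ 0 := by
    intro h
    rw [h, hv0top] at vQ
    exact absurd vQ (by simp)
  have vPinv : v (1 + s * r * t)⁻¹ = ((0 : ℤ) : WithTop ℤ) := by
    simpa using ADLVAux.v_inv v hv_top hv_mul _ hP0 0 vP
  have vQinv : v (1 + s * r * r)⁻¹ = ((0 : ℤ) : WithTop ℤ) := by
    simpa using ADLVAux.v_inv v hv_top hv_mul _ hQ0 0 vQ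
  -- Pel and imat in explicit form
  have hPelEq : Pel τ ε π n r = 1 + s * r * t := by rw [Pel, ← hs, ← ht]
  have himat : imat τ ε π n 1 r =
      !![1 + r * (s * t * (1 + s * r * t)⁻¹), r * (1 + s * r * t)⁻¹;
         s * t * (1 + s * r * t)⁻¹, (1 + s * r * t)⁻¹] := by
    rw [imat, ep, em, e0, hPelEq, _root_.map_one, ← hs, ← ht]
    ext i j
    fin_cases i <;> fin_cases j <;>
      simp [Matrix.mul_apply, Fin.sum_univ_two] <;> ring
  clear_value s t
  have hQ0' : 1 + s * r ^ 2 ≠ 0 := by rw [sq, ← mul_assoc]; exact hQ0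
  have hQ0'' : 1 + r ^ 2 * s ≠ 0 := by rw [show r ^ 2 * s = s * r * r by ring]; exact hQ0
  have hP0a : 1 + r * s * t ≠ 0 := by rw [show r * s * t = s * r * t by ring]; exact hP0
  have hP0b : 1 + s * t * r ≠ 0 := by rw [show s * t * r = s * r * t by ring]; exact hP0
  have hPQ : 1 + r * s * t + r ^ 2 * s + r ^ 3 * s ^ 2 * t ≠ 0 := by
    rw [show 1 + r * s * t + r ^ 2 * s + r ^ 3 * s ^ 2 * t = (1 + s * r * t) * (1 + s * r * r) by ring]
    exact mul_ne_zero hP0 hQ0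
  refine ⟨!![(1 + s*r*t)⁻¹ * (1 + s*r*r)⁻¹, 0;
             s*(r+t) * ((1 + s*r*t)⁻¹ * (1 + s*r*t)⁻¹ * (1 + s*r*r)⁻¹),
             (1 + s*r*t)⁻¹ * (1 + s*r*t)⁻¹],
          !![(1 + s*r*r)⁻¹ * (1 + s*r*t), 0; (1 + s*r*r)⁻¹ * (s*(r+t)), 1],
          ?_, ?_, ?_, ?_⟩
  · -- j ∈ IEr
    have e1 : (2 * m + 1 + 1) / 2 = m + 1 := by omega
    have e2 : (2 * m + 1) / 2 = m := by omega
    refine ⟨?_, ?_, ?_, ?_⟩ <;>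
      simp only [IEr, Set.mem_setOf_eq, Matrix.cons_val', Matrix.cons_val_zero,
        Matrix.empty_val', Matrix.cons_val_fin_one, Matrix.cons_val_one, Matrix.head_cons,
        Matrix.head_fin_const, Matrix.of_apply, e1, e2]
    · -- entry 00
      have key : (1 + s*r*t)⁻¹ * (1 + s*r*r)⁻¹ - 1 =
          ((1 + s*r*t)⁻¹ * (1 + s*r*r)⁻¹) * (s*r*(r+t) + (s*s) * (r*(r*r)) * t) := by
        field_simp
        linear_combination (-s*r*t - s*r*r - s*s*r*r*r*t) * h2
      rw [key]
      have bA : ((2*n + (1+d) : ℤ) : WithTop ℤ) ≤ v (s*r*(r+t)) := by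
        have h1 := ADLVAux.v_mul_ge v hv_mul s r (2*n) 0 (le_of_eq hvs.symm) hr'
        have h3 := ADLVAux.v_mul_ge v hv_mul (s*r) (r+t) (2*n+0) (1+d) h1 hvrt
        exact ADLVAux.v_ge_trans v _ _ (by omega) _ h3
      have bB : ((4*n : ℤ) : WithTop ℤ) ≤ v ((s*s) * (r*(r*r)) * t) := by
        have h1 := ADLVAux.v_mul_ge v hv_mul s s (2*n) (2*n) (le_of_eq hvs.symm) (le_of_eq hvs.symm)
        have h2' := ADLVAux.v_mul_ge v hv_mul r r 0 0 hr' hr'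
        have h3 := ADLVAux.v_mul_ge v hv_mul r (r*r) 0 (0+0) hr' h2'
        have h4 := ADLVAux.v_mul_ge v hv_mul (s*s) (r*(r*r)) (2*n+2*n) (0+(0+0)) h1 h3
        have h5 := ADLVAux.v_mul_ge v hv_mul ((s*s)*(r*(r*r))) t ((2*n+2*n)+(0+(0+0))) 0 h4 hvt
        exact ADLVAux.v_ge_trans v _ _ (by omega) _ h5
      have bSum : ((m+1 : ℤ) : WithTop ℤ) ≤ v (s*r*(r+t) + (s*s) * (r*(r*r)) * t) :=
        ADLVAux.v_add_ge v hv_add _ _ _ (ADLVAux.v_ge_trans v _ _ (by omega) _ bA)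
          (ADLVAux.v_ge_trans v _ _ (by omega) _ bB)
      have bU := ADLVAux.v_mul_ge v hv_mul ((1+s*r*t)⁻¹) ((1+s*r*r)⁻¹) 0 0
        (le_of_eq vPinv.symm) (le_of_eq vQinv.symm)
      have bF := ADLVAux.v_mul_ge v hv_mul ((1+s*r*t)⁻¹ * (1+s*r*r)⁻¹) _ (0+0) (m+1) bU bSum
      exact ADLVAux.v_ge_trans v _ _ (by omega) _ bF
    · rw [hv0top]; exact le_top
    · -- entry 10
      have bA : ((2*n + (1+d) : ℤ) : WithTop ℤ) ≤ v (s*(r+t)) := by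
        have h1 := ADLVAux.v_mul_ge v hv_mul s (r+t) (2*n) (1+d) (le_of_eq hvs.symm) hvrt
        exact h1
      have bU : ((0 + (0 + 0) : ℤ) : WithTop ℤ) ≤ v ((1+s*r*t)⁻¹ * (1+s*r*t)⁻¹ * (1+s*r*r)⁻¹) := by
        have h1 := ADLVAux.v_mul_ge v hv_mul ((1+s*r*t)⁻¹) ((1+s*r*t)⁻¹) 0 0
          (le_of_eq vPinv.symm) (le_of_eq vPinv.symm)
        exact ADLVAux.v_mul_ge v hv_mul _ _ (0+0) 0 h1 (le_of_eq vQinv.symm)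
      have bF := ADLVAux.v_mul_ge v hv_mul (s*(r+t)) _ (2*n+(1+d)) (0+(0+0)) bA bU
      exact ADLVAux.v_ge_trans v _ _ (by omega) _ bF
    · -- entry 11
      have key : (1 + s*r*t)⁻¹ * (1 + s*r*t)⁻¹ - 1 =
          ((1 + s*r*t)⁻¹ * (1 + s*r*t)⁻¹) * ((s*r*t) * (s*r*t)) := by
        field_simp
        linear_combination (-s*r*t - s*s*r*r*t*t) * h2
      rw [key]
      have bU := ADLVAux.v_mul_ge v hv_mul ((1+s*r*t)⁻¹) ((1+s*r*t)⁻¹) 0 0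
        (le_of_eq vPinv.symm) (le_of_eq vPinv.symm)
      have bX := ADLVAux.v_mul_ge v hv_mul (s*r*t) (s*r*t) (2*n) (2*n) hX hX
      have bF := ADLVAux.v_mul_ge v hv_mul _ _ (0+0) (2*n+2*n) bU bX
      exact ADLVAux.v_ge_trans v _ _ (by omega) _ bF
  · -- j' ∈ IEr
    have e1 : (2 * m + 1 + 1) / 2 = m + 1 := by omega
    have e2 : (2 * m + 1) / 2 = m := by omega
    refine ⟨?_, ?_, ?_, ?_⟩ <;>
      simp only [IEr, Set.mem_setOf_eq, Matrix.cons_val', Matrix.cons_val_zero,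
        Matrix.empty_val', Matrix.cons_val_fin_one, Matrix.cons_val_one, Matrix.head_cons,
        Matrix.head_fin_const, Matrix.of_apply, e1, e2]
    · have key : (1 + s*r*r)⁻¹ * (1 + s*r*t) - 1 = (1 + s*r*r)⁻¹ * (s*r*(r+t)) := by
        field_simp
        linear_combination (-(s*r*r)) * h2
      rw [key]
      have bA : ((2*n + (1+d) : ℤ) : WithTop ℤ) ≤ v (s*r*(r+t)) := by
        have h1 := ADLVAux.v_mul_ge v hv_mul s r (2*n) 0 (le_of_eq hvs.symm) hr'
        have h3 := ADLVAux.v_mul_ge v hv_mul (s*r) (r+t) (2*n+0) (1+d) h1 hvrt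
        exact ADLVAux.v_ge_trans v _ _ (by omega) _ h3
      have bF := ADLVAux.v_mul_ge v hv_mul ((1+s*r*r)⁻¹) _ 0 (2*n+(1+d)) (le_of_eq vQinv.symm) bA
      exact ADLVAux.v_ge_trans v _ _ (by omega) _ bF
    · rw [hv0top]; exact le_top
    · have bA : ((2*n + (1+d) : ℤ) : WithTop ℤ) ≤ v (s*(r+t)) :=
        ADLVAux.v_mul_ge v hv_mul s (r+t) (2*n) (1+d) (le_of_eq hvs.symm) hvrt
      have bF := ADLVAux.v_mul_ge v hv_mul ((1+s*r*r)⁻¹) _ 0 (2*n+(1+d)) (le_of_eq vQinv.symm) bA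
      exact ADLVAux.v_ge_trans v _ _ (by omega) _ bF
    · rw [sub_self, hv0top]; exact le_top
  · -- first equation
    rw [himat, hPelEq]
    ext i j
    fin_cases i <;> fin_cases j <;>
      simp [Matrix.mul_apply, Matrix.smul_apply, Fin.sum_univ_two, smul_eq_mul]
    · field_simp
      linear_combination (s^2*r^3*t) * h2
    · field_simp
    · field_simp
      linear_combination (-(s*r)) * h2
    · field_simp
  · -- second equation
    have hMj' : !![(1:E), r; s * r, 1] * !![(1 + s*r*r)⁻¹ * (1 + s*r*t), 0;
        (1 + s*r*r)⁻¹ * (s*(r+t)), 1] = !![1, r; s*t, 1] := by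
      ext i j
      fin_cases i <;> fin_cases j <;>
        simp [Matrix.mul_apply, Fin.sum_univ_two]
      · field_simp
        linear_combination (s*r*t) * h2
      · field_simp
        linear_combination (s*r) * h2
    apply Matrix.inv_eq_right_inv
    rw [himat, hMj']
    ext i j
    fin_cases i <;> fin_cases j <;>
      simp [Matrix.mul_apply, Fin.sum_univ_two, Matrix.one_apply]
    · field_simp
      linear_combination (s*r*t) * h2
    · field_simp
      linear_combination (s*r^2*t + r) * h2
    · field_simp
      linear_combination (s*t) * h2
    · field_simp
      ring


end ADLV
end
end

section
/- Assume n ≥ 1, m ≥ 0, 2n > d and m ≤ 2n + d − 1. For all r, u ∈ O_E the commutator i(1,r)·i(1,u)·i(1,r)⁻¹·i(1,u)⁻¹ lies in I_E^{2m+1}; in other words, the elements i(1,r) and i(1,u) commute modulo I_E^{2m+1}. -/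
open Matrix

noncomputable section

namespace ADLV

variable {E : Type*} [Field E]

set_option maxHeartbeats 1600000 in
theorem statement3 [CharP E 2]
    (τ : E →+* E) (hττ : ∀ x : E, τ (τ x) = x) (hτne : τ ≠ RingHom.id E)
    (v : E → WithTop ℤ)
    (hv_top : ∀ x : E, v x = ⊤ ↔ x = 0)
    (hv_mul : ∀ x y : E, v (x * y) = v x + v y)
    (hv_add : ∀ x y : E, min (v x) (v y) ≤ v (x + y))
    (hv_tau : ∀ x : E, v (τ x) = v x)
    (π : E) (hπ : v π = 1)
    (hv_even : ∀ x : E, τ x = x → ∀ k : ℤ, v x = (k : WithTop ℤ) → Even k)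
    (hbasis : ∀ y : E, ∃ c₀ c₁ : E, τ c₀ = c₀ ∧ τ c₁ = c₁ ∧ y = c₀ + c₁ * π)
    (d : ℤ) (hd : 0 < d) (hdodd : Odd d)
    (ε : E) (hε : ε = τ π / π)
    (hεd : v (ε - 1) = (d : WithTop ℤ))
    (n m : ℤ) (hn : 1 ≤ n) (hm : 0 ≤ m) (h2n : d < 2 * n) (hmb : m ≤ 2 * n + d - 1)
    (r u : E) (hr : (0 : WithTop ℤ) ≤ v r) (hu : (0 : WithTop ℤ) ≤ v u) :
    imat τ ε π n 1 r * imat τ ε π n 1 u * (imat τ ε π n 1 r)⁻¹ * (imat τ ε π n 1 u)⁻¹ ∈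
      IEr v (2 * m + 1) := by
  have h2 : (2:E) = 0 := CharTwo.two_eq_zero
  -- basic valuation facts
  have hvne : ∀ x : E, x ≠ 0 → ∃ k : ℤ, v x = (k : WithTop ℤ) := by
    intro x hx
    rcases WithTop.ne_top_iff_exists.mp (fun h => hx ((hv_top x).mp h)) with ⟨k, hk⟩
    exact ⟨k, hk.symm⟩
  have hv1 : v (1:E) = 0 := by
    obtain ⟨k, hk⟩ := hvne 1 one_ne_zero
    have h := hv_mul 1 1
    rw [one_mul, hk] at h
    have hk0 : k = k + k := by exact_mod_cast h
    have hk1 : k = 0 := by omega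
    rw [hk, hk1]; rfl
  have hunit : ∀ x : E, v x = 0 → x ≠ 0 := by
    intro x hx h0
    rw [h0, (hv_top 0).mpr rfl] at hx
    simp at hx
  have hvinv : ∀ x : E, v x = 0 → v x⁻¹ = 0 := by
    intro x hx
    have h := hv_mul x x⁻¹
    rw [mul_inv_cancel₀ (hunit x hx), hv1, hx, zero_add] at h
    exact h.symm
  have hπ0 : π ≠ 0 := by
    intro h
    rw [h, (hv_top 0).mpr rfl] at hπ
    exact WithTop.one_ne_top hπ.symm
  have hτπ : τ π = ε * π := by rw [hε]; exact (div_mul_cancel₀ (τ π) hπ0).symm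
  have hvε : v ε = 0 := by
    have h1 : v (ε * π) = 1 := by rw [← hτπ, hv_tau, hπ]
    rw [hv_mul, hπ] at h1
    by_cases hε0 : ε = 0
    · rw [hε0, (hv_top 0).mpr rfl] at h1
      simp at h1
    obtain ⟨k, hk⟩ := hvne ε hε0
    rw [hk] at h1
    have hk1 : (k:ℤ) + 1 = 1 := by exact_mod_cast h1
    have hk0 : k = 0 := by omega
    rw [hk, hk0]; rfl
  have hvpow0 : ∀ (x : E), v x = 0 → ∀ k : ℕ, v (x ^ k) = 0 := by
    intro x hx k
    induction k with
    | zero => simpa using hv1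
    | succ k ih => rw [pow_succ, hv_mul, ih, hx, add_zero]
  have hvπpow : ∀ k : ℕ, v (π ^ k) = ((k : ℤ) : WithTop ℤ) := by
    intro k
    induction k with
    | zero => simpa using hv1
    | succ k ih => rw [pow_succ, hv_mul, ih, hπ]; push_cast; abel
  have hva : v (ε ^ n * π ^ (2 * n)) = ((2*n : ℤ) : WithTop ℤ) := by
    have he : (ε:E) ^ n = ε ^ n.toNat := by
      rw [← zpow_natCast, Int.toNat_of_nonneg (by omega)]
    have hp : (π:E) ^ (2*n) = π ^ (2*n).toNat := by
      rw [← zpow_natCast, Int.toNat_of_nonneg (by omega)]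
    rw [he, hp, hv_mul, hvpow0 ε hvε, hvπpow, zero_add,
      Int.toNat_of_nonneg (by omega : (0:ℤ) ≤ 2*n)]
  have hva0 : (0:WithTop ℤ) ≤ v (ε ^ n * π ^ (2 * n)) := by
    rw [hva]
    exact_mod_cast (by omega : (0:ℤ) ≤ 2*n)
  have hnn : ∀ x y : E, 0 ≤ v x → 0 ≤ v y → (0:WithTop ℤ) ≤ v (x*y) := by
    intro x y hx hy
    rw [hv_mul]
    calc (0:WithTop ℤ) = 0 + 0 := (add_zero 0).symm
      _ ≤ v x + v y := add_le_add hx hy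
  have hvone_add : ∀ y : E, 0 < v y → v (1 + y) = 0 := by
    intro y hy
    have h1 : (1:E) = (1+y) + y := by linear_combination (-y) * h2
    have hmin2 := hv_add (1+y) y
    rw [← h1, hv1] at hmin2
    have hle : v (1+y) ≤ 0 := by
      by_contra hlt
      push_neg at hlt
      exact absurd hmin2 (not_le.mpr (lt_min hlt hy))
    have hge : (0:WithTop ℤ) ≤ v (1+y) := le_trans (le_min hv1.ge hy.le) (hv_add 1 y)
    exact le_antisymm hle hge
  have hr' : (0:WithTop ℤ) ≤ v (τ r) := by rw [hv_tau]; exact hr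
  have hu' : (0:WithTop ℤ) ≤ v (τ u) := by rw [hv_tau]; exact hu
  -- the key lemma : v (x + τ x) ≥ d + 1 for integral x
  have hkey : ∀ x : E, (0:WithTop ℤ) ≤ v x → ((d+1:ℤ):WithTop ℤ) ≤ v (x + τ x) := by
    intro x hx
    obtain ⟨c₀, c₁, hc₀, hc₁, hxe⟩ := hbasis x
    have hsum : x + τ x = c₁ * (π + τ π) := by
      rw [hxe, map_add, _root_.map_mul, hc₀, hc₁]
      linear_combination c₀ * h2
    have hτπ2 : π + τ π = (ε - 1) * π := by
      rw [hτπ]; linear_combination π * h2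
    have hππv : v (π + τ π) = ((d+1:ℤ):WithTop ℤ) := by
      rw [hτπ2, hv_mul, hεd, hπ]; push_cast; abel
    have hc1v : (0:WithTop ℤ) ≤ v c₁ := by
      rcases eq_or_ne c₁ 0 with h0 | h0
      · rw [h0, (hv_top 0).mpr rfl]; exact le_top
      by_contra hneg
      push_neg at hneg
      obtain ⟨k, hk⟩ := hvne c₁ h0
      have hkneg : k < 0 := by rw [hk] at hneg; exact_mod_cast hneg
      obtain ⟨j, hj⟩ := hv_even c₁ hc₁ k hk
      have hc1π : v (c₁ * π) = ((k+1:ℤ):WithTop ℤ) := by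
        rw [hv_mul, hk, hπ]; push_cast; abel
      rcases eq_or_ne c₀ 0 with hz | hz
      · have hxv : v x = ((k+1:ℤ):WithTop ℤ) := by rw [hxe, hz, zero_add, hc1π]
        rw [hxv] at hx
        have : (0:ℤ) ≤ k+1 := by exact_mod_cast hx
        omega
      · obtain ⟨k₀, hk₀⟩ := hvne c₀ hz
        obtain ⟨j₀, hj₀⟩ := hv_even c₀ hc₀ k₀ hk₀
        rcases lt_or_gt_of_ne (show k₀ ≠ k+1 by omega) with hlt | hgt
        · have he : c₀ = x + c₁ * π := by rw [hxe]; linear_combination (-(c₁ * π)) * h2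
          have hb := hv_add x (c₁ * π)
          rw [← he, hk₀, hc1π] at hb
          have hcon : ((k₀:ℤ):WithTop ℤ) < min (v x) (((k+1:ℤ):WithTop ℤ)) := by
            refine lt_min (lt_of_lt_of_le ?_ hx) ?_
            · exact_mod_cast (by omega : k₀ < 0)
            · exact_mod_cast hlt
          exact absurd hb (not_le.mpr hcon)
        · have he : c₁ * π = x + c₀ := by rw [hxe]; linear_combination (-c₀) * h2
          have hb := hv_add x c₀
          rw [← he, hc1π, hk₀] at hb
          have hcon : ((k+1:ℤ):WithTop ℤ) < min (v x) (((k₀:ℤ):WithTop ℤ)) := by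
            refine lt_min (lt_of_lt_of_le ?_ hx) ?_
            · exact_mod_cast (by omega : k+1 < 0)
            · exact_mod_cast hgt
          exact absurd hb (not_le.mpr hcon)
    calc ((d+1:ℤ):WithTop ℤ) = 0 + ((d+1:ℤ):WithTop ℤ) := (zero_add _).symm
      _ ≤ v c₁ + v (π + τ π) := add_le_add hc1v (le_of_eq hππv.symm)
      _ = v (c₁ * (π + τ π)) := (hv_mul _ _).symm
      _ = v (x + τ x) := by rw [hsum]
  -- valuations of P_r, P_u
  have hvprod : ∀ y : E, (0:WithTop ℤ) ≤ v y →
      (0:WithTop ℤ) < v (ε ^ n * π ^ (2 * n) * y) := by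
    intro y hy
    rw [hv_mul]
    refine lt_of_lt_of_le (show (0:WithTop ℤ) < ((2*n:ℤ):WithTop ℤ) from by
      exact_mod_cast (by omega : (0:ℤ) < 2*n)) ?_
    calc ((2*n:ℤ):WithTop ℤ) = ((2*n:ℤ):WithTop ℤ) + 0 := (add_zero _).symm
      _ ≤ v (ε ^ n * π ^ (2 * n)) + v y := add_le_add (le_of_eq hva.symm) hy
  have hvPr : v (1 + ε ^ n * π ^ (2 * n) * r * τ r) = 0 := by
    have := hvprod (r * τ r) (hnn r (τ r) hr hr')
    rw [← mul_assoc] at this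
    exact hvone_add _ this
  have hvPu : v (1 + ε ^ n * π ^ (2 * n) * u * τ u) = 0 := by
    have := hvprod (u * τ u) (hnn u (τ u) hu hu')
    rw [← mul_assoc] at this
    exact hvone_add _ this
  have hPr0 : (1 + ε ^ n * π ^ (2 * n) * r * τ r) ≠ 0 := hunit _ hvPr
  have hPu0 : (1 + ε ^ n * π ^ (2 * n) * u * τ u) ≠ 0 := hunit _ hvPu
  -- the matrix computations
  have hMr : imat τ ε π n 1 r =
      (1 + ε ^ n * π ^ (2 * n) * r * τ r)⁻¹ • !![1, r; ε ^ n * π ^ (2 * n) * τ r, 1] := by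
    have hPdef : Pel τ ε π n r = 1 + ε ^ n * π ^ (2 * n) * r * τ r := rfl
    have hP0 : Pel τ ε π n r ≠ 0 := by rw [hPdef]; exact hPr0
    rw [← hPdef]
    ext i j
    fin_cases i <;> fin_cases j <;>
      simp [imat, ep, em, e0, Matrix.mul_fin_two, _root_.map_one] <;>
      (try field_simp) <;> (try linear_combination hPdef) <;>
      (try linear_combination hPdef + (ε ^ n * π ^ (2 * n) * r * τ r) * h2)
  have hMu : imat τ ε π n 1 u =
      (1 + ε ^ n * π ^ (2 * n) * u * τ u)⁻¹ • !![1, u; ε ^ n * π ^ (2 * n) * τ u, 1] := by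
    have hPdef : Pel τ ε π n u = 1 + ε ^ n * π ^ (2 * n) * u * τ u := rfl
    have hP0 : Pel τ ε π n u ≠ 0 := by rw [hPdef]; exact hPu0
    rw [← hPdef]
    ext i j
    fin_cases i <;> fin_cases j <;>
      simp [imat, ep, em, e0, Matrix.mul_fin_two, _root_.map_one] <;>
      (try field_simp) <;> (try linear_combination hPdef) <;>
      (try linear_combination hPdef + (ε ^ n * π ^ (2 * n) * u * τ u) * h2)
  have hNN : ∀ y : E, (1 + ε ^ n * π ^ (2 * n) * y * τ y) ≠ 0 →
      ((1 + ε ^ n * π ^ (2 * n) * y * τ y)⁻¹ • !![1, y; ε ^ n * π ^ (2 * n) * τ y, 1]) *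
        !![1, y; ε ^ n * π ^ (2 * n) * τ y, 1] = 1 := by
    intro y hy
    rw [Matrix.smul_mul]
    ext i j
    fin_cases i <;> fin_cases j <;>
      simp [Matrix.mul_fin_two, Matrix.one_apply] <;> (try field_simp) <;>
      (try ring) <;>
      (try (right; first
        | linear_combination y * h2
        | linear_combination ε ^ n * π ^ (2 * n) * τ y * h2
        | linear_combination ε ^ n * π ^ (n * 2) * τ y * h2))
  have hinvr : (imat τ ε π n 1 r)⁻¹ = !![1, r; ε ^ n * π ^ (2 * n) * τ r, 1] :=
    Matrix.inv_eq_right_inv (by rw [hMr]; exact hNN r hPr0)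
  have hinvu : (imat τ ε π n 1 u)⁻¹ = !![1, u; ε ^ n * π ^ (2 * n) * τ u, 1] :=
    Matrix.inv_eq_right_inv (by rw [hMu]; exact hNN u hPu0)
  have hS : !![1, r; ε ^ n * π ^ (2 * n) * τ r, 1] * !![(1:E), u; ε ^ n * π ^ (2 * n) * τ u, 1] =
      !![1 + ε ^ n * π ^ (2 * n) * r * τ u, u + r;
         ε ^ n * π ^ (2 * n) * (τ r + τ u), 1 + ε ^ n * π ^ (2 * n) * τ r * u] := by
    rw [Matrix.mul_fin_two]
    ext i j
    fin_cases i <;> fin_cases j <;> simp <;> ring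
  have hT : !![1 + ε ^ n * π ^ (2 * n) * r * τ u, u + r;
         ε ^ n * π ^ (2 * n) * (τ r + τ u), 1 + ε ^ n * π ^ (2 * n) * τ r * u] *
        !![1 + ε ^ n * π ^ (2 * n) * r * τ u, u + r;
         ε ^ n * π ^ (2 * n) * (τ r + τ u), 1 + ε ^ n * π ^ (2 * n) * τ r * u] =
      !![(1 + ε ^ n * π ^ (2 * n) * r * τ r) * (1 + ε ^ n * π ^ (2 * n) * u * τ u) +
           (1 + ε ^ n * π ^ (2 * n) * r * τ u) * (ε ^ n * π ^ (2 * n) * (r * τ u + τ r * u)),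
         (u + r) * (ε ^ n * π ^ (2 * n) * (r * τ u + τ r * u));
         ε ^ n * π ^ (2 * n) * (τ r + τ u) * (ε ^ n * π ^ (2 * n) * (r * τ u + τ r * u)),
         (1 + ε ^ n * π ^ (2 * n) * r * τ r) * (1 + ε ^ n * π ^ (2 * n) * u * τ u) +
           (1 + ε ^ n * π ^ (2 * n) * τ r * u) * (ε ^ n * π ^ (2 * n) * (r * τ u + τ r * u))] := by
    rw [Matrix.mul_fin_two]
    ext i j
    fin_cases i <;> fin_cases j <;> simp <;>
      (try linear_combination (ε ^ n * π ^ (2 * n) * r * τ u -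
        (ε ^ n * π ^ (2 * n))^2 * r * τ r * τ u * u) * h2) <;>
      (try linear_combination (u + r) * h2) <;>
      (try linear_combination (ε ^ n * π ^ (2 * n) * (τ r + τ u)) * h2) <;>
      (try linear_combination (ε ^ n * π ^ (2 * n) * τ r * u -
        (ε ^ n * π ^ (2 * n))^2 * r * τ r * τ u * u) * h2)
  have hG : imat τ ε π n 1 r * imat τ ε π n 1 u * (imat τ ε π n 1 r)⁻¹ * (imat τ ε π n 1 u)⁻¹ =
      ((1 + ε ^ n * π ^ (2 * n) * r * τ r) * (1 + ε ^ n * π ^ (2 * n) * u * τ u))⁻¹ •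
      !![(1 + ε ^ n * π ^ (2 * n) * r * τ r) * (1 + ε ^ n * π ^ (2 * n) * u * τ u) +
           (1 + ε ^ n * π ^ (2 * n) * r * τ u) * (ε ^ n * π ^ (2 * n) * (r * τ u + τ r * u)),
         (u + r) * (ε ^ n * π ^ (2 * n) * (r * τ u + τ r * u));
         ε ^ n * π ^ (2 * n) * (τ r + τ u) * (ε ^ n * π ^ (2 * n) * (r * τ u + τ r * u)),
         (1 + ε ^ n * π ^ (2 * n) * r * τ r) * (1 + ε ^ n * π ^ (2 * n) * u * τ u) +
           (1 + ε ^ n * π ^ (2 * n) * τ r * u) * (ε ^ n * π ^ (2 * n) * (r * τ u + τ r * u))] := by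
    rw [hinvr, hinvu, hMr, hMu, mul_inv, ← hT, ← hS]
    simp only [Matrix.smul_mul, Matrix.mul_smul, smul_smul, Matrix.mul_assoc]
    rw [mul_comm ((1 + ε ^ n * π ^ (2 * n) * u * τ u)⁻¹)
      ((1 + ε ^ n * π ^ (2 * n) * r * τ r)⁻¹)]
  -- valuation bounds for the entries
  have hw : ((2*n+d+1:ℤ):WithTop ℤ) ≤ v (ε ^ n * π ^ (2 * n) * (r * τ u + τ r * u)) := by
    have hkey' : ((d+1:ℤ):WithTop ℤ) ≤ v (r * τ u + τ r * u) := by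
      have h := hkey (r * τ u) (hnn r (τ u) hr hu')
      rwa [_root_.map_mul, hττ] at h
    rw [hv_mul, hva]
    calc ((2*n+d+1:ℤ):WithTop ℤ) = ((2*n:ℤ):WithTop ℤ) + ((d+1:ℤ):WithTop ℤ) := by
          push_cast; abel
      _ ≤ ((2*n:ℤ):WithTop ℤ) + v (r * τ u + τ r * u) := add_le_add le_rfl hkey'
  have hvc : v (((1 + ε ^ n * π ^ (2 * n) * r * τ r) *
      (1 + ε ^ n * π ^ (2 * n) * u * τ u))⁻¹) = 0 := by
    apply hvinv
    rw [hv_mul, hvPr, hvPu, add_zero]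
  have hPrPu0 : (1 + ε ^ n * π ^ (2 * n) * r * τ r) *
      (1 + ε ^ n * π ^ (2 * n) * u * τ u) ≠ 0 := mul_ne_zero hPr0 hPu0
  have hbound : ∀ (z : E) (c : ℤ), (0:WithTop ℤ) ≤ v z → c ≤ 2*n+d+1 →
      ((c:ℤ):WithTop ℤ) ≤ v (((1 + ε ^ n * π ^ (2 * n) * r * τ r) *
        (1 + ε ^ n * π ^ (2 * n) * u * τ u))⁻¹ *
        (z * (ε ^ n * π ^ (2 * n) * (r * τ u + τ r * u)))) := by
    intro z c hz hc
    rw [hv_mul, hv_mul, hvc, zero_add]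
    calc ((c:ℤ):WithTop ℤ) ≤ ((2*n+d+1:ℤ):WithTop ℤ) := by exact_mod_cast hc
      _ ≤ v (ε ^ n * π ^ (2 * n) * (r * τ u + τ r * u)) := hw
      _ = 0 + v (ε ^ n * π ^ (2 * n) * (r * τ u + τ r * u)) := (zero_add _).symm
      _ ≤ v z + v (ε ^ n * π ^ (2 * n) * (r * τ u + τ r * u)) := add_le_add hz le_rfl
  have hα : (0:WithTop ℤ) ≤ v (1 + ε ^ n * π ^ (2 * n) * r * τ u) := by
    refine le_trans (le_min hv1.ge ?_) (hv_add 1 _)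
    exact hnn _ (τ u) (hnn _ r hva0 hr) hu'
  have hδ : (0:WithTop ℤ) ≤ v (1 + ε ^ n * π ^ (2 * n) * τ r * u) := by
    refine le_trans (le_min hv1.ge ?_) (hv_add 1 _)
    exact hnn _ u (hnn _ (τ r) hva0 hr') hu
  have hβ : (0:WithTop ℤ) ≤ v (u + r) := le_trans (le_min hu hr) (hv_add u r)
  have hγ : (0:WithTop ℤ) ≤ v (ε ^ n * π ^ (2 * n) * (τ r + τ u)) :=
    hnn _ _ hva0 (le_trans (le_min hr' hu') (hv_add (τ r) (τ u)))
  -- finish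
  simp only [IEr, Set.mem_setOf_eq]
  rw [hG, show (2*m+1+1)/2 = m+1 from by omega, show (2*m+1)/2 = m from by omega]
  refine ⟨?_, ?_, ?_, ?_⟩ <;>
    simp only [Matrix.smul_apply, smul_eq_mul, Matrix.cons_val', Matrix.cons_val_zero,
      Matrix.cons_val_one, Matrix.head_cons, Matrix.head_fin_const, Matrix.empty_val',
      Matrix.cons_val_fin_one, Matrix.of_apply]
  · rw [show ((1 + ε ^ n * π ^ (2 * n) * r * τ r) * (1 + ε ^ n * π ^ (2 * n) * u * τ u))⁻¹ *
        ((1 + ε ^ n * π ^ (2 * n) * r * τ r) * (1 + ε ^ n * π ^ (2 * n) * u * τ u) +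
         (1 + ε ^ n * π ^ (2 * n) * r * τ u) * (ε ^ n * π ^ (2 * n) * (r * τ u + τ r * u))) - 1 =
        ((1 + ε ^ n * π ^ (2 * n) * r * τ r) * (1 + ε ^ n * π ^ (2 * n) * u * τ u))⁻¹ *
        ((1 + ε ^ n * π ^ (2 * n) * r * τ u) * (ε ^ n * π ^ (2 * n) * (r * τ u + τ r * u))) from by
      rw [mul_add, inv_mul_cancel₀ hPrPu0]; ring]
    exact hbound _ (m+1) hα (by omega)
  · exact hbound _ m hβ (by omega)
  · exact hbound _ (m+1) hγ (by omega)
  · rw [show ((1 + ε ^ n * π ^ (2 * n) * r * τ r) * (1 + ε ^ n * π ^ (2 * n) * u * τ u))⁻¹ *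
        ((1 + ε ^ n * π ^ (2 * n) * r * τ r) * (1 + ε ^ n * π ^ (2 * n) * u * τ u) +
         (1 + ε ^ n * π ^ (2 * n) * τ r * u) * (ε ^ n * π ^ (2 * n) * (r * τ u + τ r * u))) - 1 =
        ((1 + ε ^ n * π ^ (2 * n) * r * τ r) * (1 + ε ^ n * π ^ (2 * n) * u * τ u))⁻¹ *
        ((1 + ε ^ n * π ^ (2 * n) * τ r * u) * (ε ^ n * π ^ (2 * n) * (r * τ u + τ r * u))) from by
      rw [mul_add, inv_mul_cancel₀ hPrPu0]; ring]
    exact hbound _ (m+1) hδ (by omega)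

end ADLV
end
end

section
/- Assume n ≥ 1, m ≥ 0, 2n > d and m ≤ 2n + d − 1. For all t ∈ E^× and r ∈ O_E there exists j ∈ I_E^{2m+1} such that i(t,0)·i(1,r)·i(t,0)⁻¹·i(1,r)⁻¹ = e₊((1 + t·τ(t)⁻¹)·r)·j. (Here i(t,0) = e₀(t, τ(t)).) -/
open Matrix

noncomputable section

namespace ADLV

variable {E : Type*} [Field E]

lemma ep_add (a b : E) : ep a * ep b = ep (a + b) := by
  ext i j
  fin_cases i <;> fin_cases j <;>
    simp [ep, Matrix.mul_apply, Fin.sum_univ_two] <;> ring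

lemma em_add (a b : E) : em a * em b = em (a + b) := by
  ext i j
  fin_cases i <;> fin_cases j <;>
    simp [em, Matrix.mul_apply, Fin.sum_univ_two] <;> ring

lemma e0_mul (a b c d : E) : e0 a b * e0 c d = e0 (a * c) (b * d) := by
  ext i j
  fin_cases i <;> fin_cases j <;>
    simp [e0, Matrix.mul_apply, Fin.sum_univ_two]

lemma ep_zero : (ep 0 : Matrix (Fin 2) (Fin 2) E) = 1 := by
  ext i j
  fin_cases i <;> fin_cases j <;> simp [ep, Matrix.one_apply]

lemma em_zero : (em 0 : Matrix (Fin 2) (Fin 2) E) = 1 := by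
  ext i j
  fin_cases i <;> fin_cases j <;> simp [em, Matrix.one_apply]

lemma e0_one : (e0 1 1 : Matrix (Fin 2) (Fin 2) E) = 1 := by
  ext i j
  fin_cases i <;> fin_cases j <;> simp [e0, Matrix.one_apply]

lemma conj_chain (t T P c r : E) (ht : t ≠ 0) (hT : T ≠ 0) (hP : P ≠ 0) :
    e0 t T * (ep r * em c * e0 1 P⁻¹) * e0 t⁻¹ T⁻¹ * (e0 1 P * em c * ep r)
      = ep (t * T⁻¹ * r) * (em ((T * t⁻¹ + 1) * c) * ep r) := by
  ext i j
  fin_cases i <;> fin_cases j <;>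
    simp [ep, em, e0, Matrix.mul_apply, Fin.sum_univ_two] <;>
    field_simp <;>
    ring

lemma e0_inv (a b : E) (ha : a ≠ 0) (hb : b ≠ 0) : (e0 a b)⁻¹ = e0 a⁻¹ b⁻¹ :=
  Matrix.inv_eq_right_inv (by
    rw [e0_mul, mul_inv_cancel₀ ha, mul_inv_cancel₀ hb, e0_one])

set_option maxHeartbeats 2000000 in
theorem statement4 [CharP E 2]
    (τ : E →+* E) (hττ : ∀ x : E, τ (τ x) = x) (hτne : τ ≠ RingHom.id E)
    (v : E → WithTop ℤ)
    (hv_top : ∀ x : E, v x = ⊤ ↔ x = 0)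
    (hv_mul : ∀ x y : E, v (x * y) = v x + v y)
    (hv_add : ∀ x y : E, min (v x) (v y) ≤ v (x + y))
    (hv_tau : ∀ x : E, v (τ x) = v x)
    (π : E) (hπ : v π = 1)
    (hv_even : ∀ x : E, τ x = x → ∀ k : ℤ, v x = (k : WithTop ℤ) → Even k)
    (hbasis : ∀ y : E, ∃ c₀ c₁ : E, τ c₀ = c₀ ∧ τ c₁ = c₁ ∧ y = c₀ + c₁ * π)
    (d : ℤ) (hd : 0 < d) (hdodd : Odd d)
    (ε : E) (hε : ε = τ π / π)
    (hεd : v (ε - 1) = (d : WithTop ℤ))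
    (n m : ℤ) (hn : 1 ≤ n) (hm : 0 ≤ m) (h2n : d < 2 * n) (hmb : m ≤ 2 * n + d - 1)
    (t : E) (ht : t ≠ 0) (r : E) (hr : (0 : WithTop ℤ) ≤ v r) :
    ∃ j ∈ IEr v (2 * m + 1),
      imat τ ε π n t 0 * imat τ ε π n 1 r * (imat τ ε π n t 0)⁻¹ * (imat τ ε π n 1 r)⁻¹ =
        ep ((1 + t * (τ t)⁻¹) * r) * j := by
  have h2E : ∀ x : E, x + x = 0 := fun x => CharTwo.add_self_eq_zero x
  -- basic valuation facts
  have hfin : ∀ x : E, x ≠ 0 → ∃ k : ℤ, v x = (k : WithTop ℤ) := by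
    intro x hx
    obtain ⟨k, hk⟩ := WithTop.ne_top_iff_exists.1 (fun hh => hx ((hv_top x).1 hh))
    exact ⟨k, hk.symm⟩
  have hv1 : v 1 = 0 := by
    have h := hv_mul 1 1
    rw [one_mul] at h
    obtain ⟨k, hk⟩ := hfin 1 one_ne_zero
    rw [hk] at h ⊢
    have hk2 : k = k + k := by exact_mod_cast h
    have : k = 0 := by omega
    simp [this]
  have hinv : ∀ (x : E) (k : ℤ), v x = (k : WithTop ℤ) → v x⁻¹ = ((-k : ℤ) : WithTop ℤ) := by
    intro x k hk
    have hx : x ≠ 0 := by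
      intro h; rw [h, (hv_top 0).2 rfl] at hk; simp at hk
    have h := hv_mul x x⁻¹
    rw [mul_inv_cancel₀ hx, hv1, hk] at h
    obtain ⟨j, hj⟩ := hfin x⁻¹ (inv_ne_zero hx)
    rw [hj] at h ⊢
    have h0 : (0:ℤ) = k + j := by exact_mod_cast h
    have : j = -k := by omega
    rw [this]
  have hvpow : ∀ (x : E) (e : ℤ), v x = (e : WithTop ℤ) → ∀ k : ℕ,
      v (x ^ k) = ((k * e : ℤ) : WithTop ℤ) := by
    intro x e hx k
    induction k with
    | zero => simpa using hv1
    | succ k ih =>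
      rw [pow_succ, hv_mul, ih, hx, ← WithTop.coe_add]
      congr 1
      push_cast
      ring
  have hvzpow : ∀ (x : E) (e : ℤ), v x = (e : WithTop ℤ) → ∀ k : ℤ, 0 ≤ k →
      v (x ^ k) = ((k * e : ℤ) : WithTop ℤ) := by
    intro x e hx k hk
    lift k to ℕ using hk
    rw [zpow_natCast]
    exact hvpow x e hx k
  have hπ' : v π = ((1 : ℤ) : WithTop ℤ) := by exact_mod_cast hπ
  have hπ0 : π ≠ 0 := by
    intro h
    rw [h, (hv_top 0).2 rfl] at hπ
    simp at hπ
  have hτπ : τ π = ε * π := by rw [hε]; field_simp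
  have hvε : v ε = ((0:ℤ) : WithTop ℤ) := by
    have hπi := hinv π 1 hπ'
    rw [hε, div_eq_mul_inv, hv_mul, hv_tau, hπ', hπi, ← WithTop.coe_add]
    norm_num
  have hvεn : v (ε ^ n) = ((0:ℤ) : WithTop ℤ) := by
    have := hvzpow ε 0 hvε n (by omega)
    simpa using this
  have hvπ2n : v (π ^ (2 * n)) = ((2 * n : ℤ) : WithTop ℤ) := by
    have := hvzpow π 1 hπ' (2 * n) (by omega)
    simpa using this
  -- P and its valuation
  set P := Pel τ ε π n r with hPdef
  set X := ε ^ n * π ^ (2 * n) * r * τ r with hXdef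
  have hPX : P = 1 + X := rfl
  have hvX : ((2 * n : ℤ) : WithTop ℤ) ≤ v X := by
    rw [hXdef, hv_mul, hv_mul, hv_mul, hvεn, hvπ2n, hv_tau]
    calc ((2 * n : ℤ) : WithTop ℤ) = ((0:ℤ) : WithTop ℤ) + ((2*n : ℤ) : WithTop ℤ) + 0 + 0 := by
          norm_num
      _ ≤ ((0:ℤ) : WithTop ℤ) + ((2*n : ℤ) : WithTop ℤ) + v r + v r := by
          exact add_le_add (add_le_add le_rfl hr) hr
  have hvX0 : (0 : WithTop ℤ) ≤ v X :=
    le_trans (by exact_mod_cast (by omega : (0:ℤ) ≤ 2 * n)) hvX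
  have hvP : v P = 0 := by
    have hge : (0 : WithTop ℤ) ≤ v P := by
      have h := hv_add 1 X
      rw [hv1, min_eq_left hvX0] at h
      exact h
    have hle : v P ≤ 0 := by
      have h := hv_add (1 + X) X
      have hre : (1 + X) + X = 1 := by rw [add_assoc, h2E, add_zero]
      rw [hre, hv1, ← hPX] at h
      rcases le_total (v P) (v X) with hc | hc
      · rwa [min_eq_left hc] at h
      · rw [min_eq_right hc] at h
        exfalso
        have : ((2 * n : ℤ) : WithTop ℤ) ≤ 0 := le_trans hvX h
        have : (2 * n : ℤ) ≤ 0 := by exact_mod_cast this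
        omega
    exact le_antisymm hle hge
  have hPne : P ≠ 0 := by
    intro h
    rw [h, (hv_top 0).2 rfl] at hvP
    simp at hvP
  have hvPinv : v P⁻¹ = ((0:ℤ) : WithTop ℤ) := by
    have := hinv P 0 (by exact_mod_cast hvP)
    simpa using this
  -- c and its valuation
  set cc := ε ^ n * π ^ (2 * n) * τ r * P⁻¹ with hccdef
  have hvcc : ((2 * n : ℤ) : WithTop ℤ) ≤ v cc := by
    rw [hccdef, hv_mul, hv_mul, hv_mul, hvεn, hvπ2n, hv_tau, hvPinv]
    calc ((2 * n : ℤ) : WithTop ℤ)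
        = ((0:ℤ) : WithTop ℤ) + ((2*n : ℤ) : WithTop ℤ) + 0 + ((0:ℤ) : WithTop ℤ) := by norm_num
      _ ≤ ((0:ℤ) : WithTop ℤ) + ((2*n : ℤ) : WithTop ℤ) + v r + ((0:ℤ) : WithTop ℤ) := by
          exact add_le_add (add_le_add le_rfl hr) le_rfl
  -- v(x) < v(y) → v(x+y) = v(x)
  have hv_lt : ∀ x y : E, v x < v y → v (x + y) = v x := by
    intro x y hxy
    have hge : v x ≤ v (x + y) := by
      have := hv_add x y
      rwa [min_eq_left (le_of_lt hxy)] at this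
    have hle : v (x + y) ≤ v x := by
      have h := hv_add (x + y) y
      have hre : (x + y) + y = x := by rw [add_assoc, h2E, add_zero]
      rw [hre] at h
      rcases le_total (v (x + y)) (v y) with hc | hc
      · rwa [min_eq_left hc] at h
      · rw [min_eq_right hc] at h
        exact absurd h (not_le.mpr hxy)
    exact le_antisymm hle hge
  -- key: v t + d ≤ v (t + τ t)
  have hkey : ∀ s : E, s ≠ 0 → v s + (d : WithTop ℤ) ≤ v (s + τ s) := by
    intro s hs
    obtain ⟨c₀, c₁, h0, h1, hst⟩ := hbasis s
    have hτs : τ s = c₀ + c₁ * (ε * π) := by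
      rw [hst, map_add, _root_.map_mul, h0, h1, hτπ]
    have hsum : s + τ s = c₁ * ((1 + ε) * π) := by
      rw [hτs, hst]
      linear_combination h2E c₀
    have hv1ε : v (1 + ε) = (d : WithTop ℤ) := by
      have : 1 + ε = ε - 1 := by
        rw [sub_eq_add_neg, CharTwo.neg_eq]; ring
      rw [this, hεd]
    by_cases hc1 : c₁ = 0
    · rw [hsum, hc1, zero_mul, (hv_top 0).2 rfl]
      exact le_top
    · obtain ⟨k₁, hk₁⟩ := hfin c₁ hc1
      have hek₁ : Even k₁ := hv_even c₁ h1 k₁ hk₁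
      have hvsum : v (s + τ s) = ((k₁ + d + 1 : ℤ) : WithTop ℤ) := by
        rw [hsum, hv_mul, hv_mul, hk₁, hv1ε, hπ', ← WithTop.coe_add, ← WithTop.coe_add]
        congr 1
        ring
      have hvs : v s ≤ ((k₁ + 1 : ℤ) : WithTop ℤ) := by
        have hvc1π : v (c₁ * π) = ((k₁ + 1 : ℤ) : WithTop ℤ) := by
          rw [hv_mul, hk₁, hπ', ← WithTop.coe_add]
        by_cases hc0 : c₀ = 0
        · rw [hst, hc0, zero_add, hvc1π]
        · obtain ⟨k₀, hk₀⟩ := hfin c₀ hc0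
          have hek₀ : Even k₀ := hv_even c₀ h0 k₀ hk₀
          rcases lt_trichotomy k₀ (k₁ + 1) with hlt | heq | hgt
          · have : v c₀ < v (c₁ * π) := by
              rw [hk₀, hvc1π]; exact_mod_cast hlt
            rw [hst, hv_lt c₀ (c₁ * π) this, hk₀]
            exact_mod_cast le_of_lt hlt
          · exfalso
            obtain ⟨a₀, ha₀⟩ := hek₀
            obtain ⟨a₁, ha₁⟩ := hek₁
            omega
          · have : v (c₁ * π) < v c₀ := by
              rw [hk₀, hvc1π]; exact_mod_cast hgt
            have heq2 : v (c₁ * π + c₀) = v (c₁ * π) := hv_lt (c₁ * π) c₀ this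
            rw [hst, add_comm, heq2, hvc1π]
      obtain ⟨ks, hks⟩ := hfin s hs
      rw [hks, hvsum, ← WithTop.coe_add]
      have : ks ≤ k₁ + 1 := by
        rw [hks] at hvs; exact_mod_cast hvs
      exact_mod_cast by omega
  -- the element a and its valuation
  have hτt0 : τ t ≠ 0 := fun h => ht (by
    have := congrArg τ h
    rwa [hττ, map_zero] at this)
  set a := (τ t * t⁻¹ + 1) * cc with hadef
  obtain ⟨kt, hkt⟩ := hfin t ht
  have hva : ((2 * n + d : ℤ) : WithTop ℤ) ≤ v a := by
    have hta : τ t * t⁻¹ + 1 = (t + τ t) * t⁻¹ := by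
      field_simp
      ring
    have h1 : (d : WithTop ℤ) ≤ v (τ t * t⁻¹ + 1) := by
      rw [hta, hv_mul, hinv t kt hkt]
      have hk := hkey t ht
      rw [hkt] at hk
      calc (d : WithTop ℤ) = ((kt + d : ℤ) : WithTop ℤ) + ((-kt : ℤ) : WithTop ℤ) := by
            rw [← WithTop.coe_add]
            exact_mod_cast (by ring : (d : ℤ) = kt + d + -kt)
        _ ≤ v (t + τ t) + ((-kt : ℤ) : WithTop ℤ) := by
            refine add_le_add ?_ le_rfl
            rw [WithTop.coe_add]
            exact hk
    rw [hadef, hv_mul]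
    calc ((2 * n + d : ℤ) : WithTop ℤ) = (d : WithTop ℤ) + ((2 * n : ℤ) : WithTop ℤ) := by
          rw [← WithTop.coe_add]; congr 1; ring
      _ ≤ v (τ t * t⁻¹ + 1) + v cc := add_le_add h1 hvcc
  -- matrix identities
  have hA : imat τ ε π n t 0 = e0 t (τ t) := by
    simp [imat, Pel, ep_zero, em_zero]
  have hB : imat τ ε π n 1 r = ep r * em cc * e0 1 P⁻¹ := by
    simp only [imat, _root_.map_one, one_mul]
    rfl
  have hAinv : (imat τ ε π n t 0)⁻¹ = e0 t⁻¹ (τ t)⁻¹ := by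
    rw [hA, e0_inv t (τ t) ht hτt0]
  have hBinv : (imat τ ε π n 1 r)⁻¹ = e0 1 P * em cc * ep r := by
    rw [hB]
    apply Matrix.inv_eq_right_inv
    simp only [mul_assoc]
    rw [← mul_assoc (e0 1 P⁻¹) (e0 1 P), e0_mul, one_mul, inv_mul_cancel₀ hPne, e0_one, one_mul,
      ← mul_assoc (em cc) (em cc), em_add, h2E, em_zero, one_mul, ep_add, h2E, ep_zero]
  clear_value X P cc a
  refine ⟨ep r * em a * ep r, ?_, ?_⟩
  · -- membership in IEr
    have hj : ep r * em a * ep r = !![1 + r * a, r * a * r; a, a * r + 1] := by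
      ext i j
      fin_cases i <;> fin_cases j <;>
        simp [ep, em, Matrix.mul_apply, Fin.sum_univ_two] <;>
        linear_combination h2E r
    have hbnd : ∀ x : E, ((2 * n + d : ℤ) : WithTop ℤ) ≤ v x →
        ∀ k : ℤ, k ≤ 2 * n + d → ((k : ℤ) : WithTop ℤ) ≤ v x := by
      intro x hx k hk
      exact le_trans (by exact_mod_cast hk) hx
    have hra : ((2 * n + d : ℤ) : WithTop ℤ) ≤ v (r * a) := by
      rw [hv_mul]
      calc ((2 * n + d : ℤ) : WithTop ℤ) = 0 + ((2 * n + d : ℤ) : WithTop ℤ) := (zero_add _).symm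
        _ ≤ v r + v a := add_le_add hr hva
    have har : ((2 * n + d : ℤ) : WithTop ℤ) ≤ v (a * r) := by
      rw [hv_mul]
      calc ((2 * n + d : ℤ) : WithTop ℤ) = ((2 * n + d : ℤ) : WithTop ℤ) + 0 := (add_zero _).symm
        _ ≤ v a + v r := add_le_add hva hr
    have hrar : ((2 * n + d : ℤ) : WithTop ℤ) ≤ v (r * a * r) := by
      rw [hv_mul]
      calc ((2 * n + d : ℤ) : WithTop ℤ) = ((2 * n + d : ℤ) : WithTop ℤ) + 0 := (add_zero _).symm
        _ ≤ v (r * a) + v r := add_le_add hra hr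
    rw [hj]
    refine ⟨?_, ?_, ?_, ?_⟩
    · show _ ≤ v (1 + r * a - 1)
      rw [show (1 : E) + r * a - 1 = r * a from by ring]
      exact hbnd _ hra _ (by omega)
    · show _ ≤ v (r * a * r)
      exact hbnd _ hrar _ (by omega)
    · show _ ≤ v a
      exact hbnd _ hva _ (by omega)
    · show _ ≤ v (a * r + 1 - 1)
      rw [show a * r + 1 - 1 = a * r from by ring]
      exact hbnd _ har _ (by omega)
  · -- the matrix identity
    rw [hAinv, hBinv, hA, hB]
    have hRHS : ep ((1 + t * (τ t)⁻¹) * r) * (ep r * em a * ep r)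
        = ep (t * (τ t)⁻¹ * r) * (em a * ep r) := by
      rw [← mul_assoc, ← mul_assoc, ep_add,
        show (1 + t * (τ t)⁻¹) * r + r = t * (τ t)⁻¹ * r from by linear_combination h2E r,
        mul_assoc]
    rw [hRHS, hadef]
    exact conj_chain t (τ t) P cc r ht hτt0 hPne
end ADLV
end
end

section
/- (Structure of the stabilizer group Γ̃.) Let n ≥ 1 and m ≥ 0 be integers. Let g ∈ GL₂(E) be of the form g = z·h where z ∈ E^× is a scalar matrix and h ∈ I_E. Then the following are equivalent: (1) there exist j₁, j₂ ∈ I_E^{2m+1} with g⁻¹·ẇ·τ(g) = j₁·ẇ·j₂ (i.e. g stabilizes the double coset I_E^{2m+1}·ẇ·I_E^{2m+1} under τ-conjugation); (2) there exist t ∈ E^×, r ∈ O_E and j ∈ I_E^{2m+1} with g = i(t,r)·j. -/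
open Matrix

noncomputable section

namespace ADLV

variable {E : Type*} [Field E]

set_option linter.unusedSectionVars false
set_option maxHeartbeats 1000000

section AuxADLV

lemma mat2_eq {a b c d a' b' c' d' : E} (h00 : a = a') (h01 : b = b')
    (h10 : c = c') (h11 : d = d') : !![a, b; c, d] = !![a', b'; c', d'] := by
  rw [h00, h01, h10, h11]

lemma smul_mat2 (s a b c d : E) : s • !![a, b; c, d] = !![s * a, s * b; s * c, s * d] := by
  ext i j
  fin_cases i <;> fin_cases j <;> simp

lemma map_mat2 (f : E →+* E) (a b c d : E) :
    (!![a, b; c, d]).map f = !![f a, f b; f c, f d] := by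
  ext i j
  fin_cases i <;> fin_cases j <;> simp

section Aux

variable (v : E → WithTop ℤ)
variable (hv_top : ∀ x : E, v x = ⊤ ↔ x = 0)
variable (hv_mul : ∀ x y : E, v (x * y) = v x + v y)
variable (hv_add : ∀ x y : E, min (v x) (v y) ≤ v (x + y))

include hv_top in
lemma v_ne_top {x : E} (hx : x ≠ 0) : v x ≠ ⊤ := fun h => hx ((hv_top x).mp h)

include hv_top in
lemma v_zero' : v 0 = ⊤ := (hv_top 0).mpr rfl

include hv_top hv_mul in
lemma v_one' : v 1 = 0 := by
  have h1 : v 1 = v 1 + v 1 := by simpa using hv_mul 1 1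
  have hne : v 1 ≠ ⊤ := v_ne_top v hv_top one_ne_zero
  lift v 1 to ℤ using hne with k hk
  have : (k : ℤ) = k + k := by exact_mod_cast h1
  have : k = 0 := by omega
  exact_mod_cast this

include hv_top hv_mul in
lemma v_ne_zero {x : E} (hx : v x = 0) : x ≠ 0 := by
  intro h; rw [h, v_zero' v hv_top] at hx; exact (by simp at hx)

include hv_top hv_mul in
lemma v_inv_zero {x : E} (hx : v x = 0) : v x⁻¹ = 0 := by
  have hx0 : x ≠ 0 := v_ne_zero v hv_top hv_mul hx
  have h := hv_mul x⁻¹ x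
  rw [inv_mul_cancel₀ hx0, v_one' v hv_top hv_mul, hx, add_zero] at h
  exact h.symm

include hv_top hv_mul in
lemma v_inv_int {x : E} {c : ℤ} (hx : v x = (c : WithTop ℤ)) :
    v x⁻¹ = ((-c : ℤ) : WithTop ℤ) := by
  have hx0 : x ≠ 0 := by
    intro h; rw [h, v_zero' v hv_top] at hx; exact (by simp at hx)
  have h := hv_mul x⁻¹ x
  rw [inv_mul_cancel₀ hx0, v_one' v hv_top hv_mul, hx] at h
  have hne : v x⁻¹ ≠ ⊤ := v_ne_top v hv_top (inv_ne_zero hx0)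
  lift v x⁻¹ to ℤ using hne with k hk
  have : (0 : ℤ) = k + c := by exact_mod_cast h
  have : k = -c := by omega
  exact_mod_cast this

include hv_add in
lemma v_ge_add {k : WithTop ℤ} {x y : E} (hx : k ≤ v x) (hy : k ≤ v y) :
    k ≤ v (x + y) := le_trans (le_min hx hy) (hv_add x y)

include hv_mul in
lemma v_mul_ge {k₁ k₂ : ℤ} {x y : E} (hx : (k₁ : WithTop ℤ) ≤ v x)
    (hy : (k₂ : WithTop ℤ) ≤ v y) : ((k₁ + k₂ : ℤ) : WithTop ℤ) ≤ v (x * y) := by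
  rw [hv_mul, WithTop.coe_add]; exact add_le_add hx hy

include hv_top hv_mul hv_add in
lemma v_add_eq_left [CharP E 2] {x y : E} (hxy : v x < v y) : v (x + y) = v x := by
  refine le_antisymm ?_ (le_trans (le_of_eq (min_eq_left hxy.le).symm) (hv_add x y))
  by_contra hlt
  push_neg at hlt
  have hx2 : x = (x + y) + y := by
    rw [add_assoc, CharTwo.add_self_eq_zero, add_zero]
  have : v x < v x := by
    calc v x < min (v (x + y)) (v y) := lt_min hlt hxy
    _ ≤ v ((x + y) + y) := hv_add _ _
    _ = v x := by rw [← hx2]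
  exact lt_irrefl _ this

include hv_top hv_mul hv_add in
lemma v_one_add [CharP E 2] {x : E} (hx : 0 < v x) : v (1 + x) = 0 := by
  rw [show (0 : WithTop ℤ) = v 1 from (v_one' v hv_top hv_mul).symm] at hx ⊢
  exact v_add_eq_left v hv_top hv_mul hv_add hx

include hv_top hv_mul hv_add in
lemma v_nonneg_of_sub_one {k : WithTop ℤ} (hk : 0 ≤ k) {x : E}
    (hx : k ≤ v (x - 1)) : (0 : WithTop ℤ) ≤ v x := by
  have hxx : x = (x - 1) + 1 := by ring
  rw [hxx]
  exact v_ge_add v hv_add (le_trans hk hx) (le_of_eq (v_one' v hv_top hv_mul).symm)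

include hv_top hv_mul hv_add in
lemma v_unit_mul_sub_one {k : WithTop ℤ} (hk : 0 ≤ k) {x y : E}
    (hx : k ≤ v (x - 1)) (hy : k ≤ v (y - 1)) : k ≤ v (x * y - 1) := by
  have hid : x * y - 1 = (x - 1) * y + (y - 1) := by ring
  rw [hid]
  refine v_ge_add v hv_add ?_ hy
  calc k = k + 0 := (add_zero k).symm
  _ ≤ v (x - 1) + v y := add_le_add hx (v_nonneg_of_sub_one v hv_top hv_mul hv_add hk hy)
  _ = v ((x - 1) * y) := (hv_mul _ _).symm

include hv_top hv_mul in
lemma v_zpow_zero {x : E} (hx : v x = 0) (k : ℤ) : v (x ^ k) = 0 := by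
  have hx0 : x ≠ 0 := v_ne_zero v hv_top hv_mul hx
  induction k using Int.induction_on with
  | zero => simpa using v_one' v hv_top hv_mul
  | succ i ih => rw [zpow_add_one₀ hx0, hv_mul, ih, hx, add_zero]
  | pred i ih => rw [zpow_sub_one₀ hx0, hv_mul, ih, v_inv_zero v hv_top hv_mul hx, add_zero]

include hv_top hv_mul in
lemma v_zpow {x : E} {c : ℤ} (hx : v x = (c : WithTop ℤ)) (k : ℤ) :
    v (x ^ k) = ((k * c : ℤ) : WithTop ℤ) := by
  have hx0 : x ≠ 0 := by
    intro h; rw [h, v_zero' v hv_top] at hx; exact (by simp at hx)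
  induction k using Int.induction_on with
  | zero => simpa using v_one' v hv_top hv_mul
  | succ i ih =>
    rw [zpow_add_one₀ hx0, hv_mul, ih, hx, ← WithTop.coe_add]
    congr 1; ring
  | pred i ih =>
    rw [zpow_sub_one₀ hx0, hv_mul, ih, v_inv_int v hv_top hv_mul hx, ← WithTop.coe_add]
    congr 1; ring

end Aux

end AuxADLV

theorem statement5 [CharP E 2]
    (τ : E →+* E) (hττ : ∀ x : E, τ (τ x) = x) (hτne : τ ≠ RingHom.id E)
    (v : E → WithTop ℤ)
    (hv_top : ∀ x : E, v x = ⊤ ↔ x = 0)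
    (hv_mul : ∀ x y : E, v (x * y) = v x + v y)
    (hv_add : ∀ x y : E, min (v x) (v y) ≤ v (x + y))
    (hv_tau : ∀ x : E, v (τ x) = v x)
    (π : E) (hπ : v π = 1)
    (hv_even : ∀ x : E, τ x = x → ∀ k : ℤ, v x = (k : WithTop ℤ) → Even k)
    (hbasis : ∀ y : E, ∃ c₀ c₁ : E, τ c₀ = c₀ ∧ τ c₁ = c₁ ∧ y = c₀ + c₁ * π)
    (d : ℤ) (hd : 0 < d) (hdodd : Odd d)
    (ε : E) (hε : ε = τ π / π)
    (hεd : v (ε - 1) = (d : WithTop ℤ))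
    (n m : ℤ) (hn : 1 ≤ n) (hm : 0 ≤ m)
    (z : E) (hz : z ≠ 0) (h : Matrix (Fin 2) (Fin 2) E) (hh : h ∈ IwE v)
    (g : Matrix (Fin 2) (Fin 2) E) (hg : g = z • h) :
    (∃ j₁ ∈ IEr v (2 * m + 1), ∃ j₂ ∈ IEr v (2 * m + 1),
        g⁻¹ * wdot ε π n * g.map ⇑τ = j₁ * wdot ε π n * j₂) ↔
      ∃ t r : E, t ≠ 0 ∧ (0 : WithTop ℤ) ≤ v r ∧
        ∃ j ∈ IEr v (2 * m + 1), g = imat τ ε π n t r * j := by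
  have h2 : (2 : E) = 0 := CharTwo.two_eq_zero
  have hπ' : v π = ((1 : ℤ) : WithTop ℤ) := by exact_mod_cast hπ
  have hπ0 : π ≠ 0 := by
    intro h0; rw [h0, v_zero' v hv_top] at hπ; exact (by simp at hπ)
  have hvε : v ε = 0 := by
    have h1 : (0 : WithTop ℤ) < v (ε - 1) := by
      rw [hεd]; exact_mod_cast hd
    have h3 := v_one_add v hv_top hv_mul hv_add h1
    have h4 : (1 : E) + (ε - 1) = ε := by ring
    rwa [h4] at h3
  have hε0 : ε ≠ 0 := v_ne_zero v hv_top hv_mul hvε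
  have hτ0 : ∀ x : E, x ≠ 0 → τ x ≠ 0 := by
    intro x hx h0
    have := hv_tau x
    rw [h0, v_zero' v hv_top] at this
    exact hx ((hv_top x).mp this.symm)
  have hτπ : τ π = ε * π := by rw [hε]; field_simp
  have hτε : τ ε = ε⁻¹ := by
    have h5 : τ ε = π / τ π := by rw [hε, map_div₀, hττ]
    rw [h5, hε, inv_div]
  set aa := ε ^ n * π ^ (2 * n) with haa
  clear_value aa
  have hτaa : τ aa = aa := by
    rw [haa, _root_.map_mul, map_zpow₀, map_zpow₀, hτε, hτπ, _root_.inv_zpow, ← _root_.zpow_neg, _root_.mul_zpow,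
      ← mul_assoc, ← zpow_add₀ hε0]
    congr 2
    ring
  have hvaa : v aa = ((2 * n : ℤ) : WithTop ℤ) := by
    rw [haa, hv_mul, v_zpow_zero v hv_top hv_mul hvε n, v_zpow v hv_top hv_mul hπ' (2 * n),
      zero_add, mul_one]
  have haa0 : aa ≠ 0 := by
    rw [haa]; exact mul_ne_zero (zpow_ne_zero _ hε0) (zpow_ne_zero _ hπ0)
  set W1 := π ^ (-n) * ε ^ (-((n + 1) / 2)) with hW1def
  clear_value W1
  have hW10 : W1 ≠ 0 := by rw [hW1def]; exact mul_ne_zero (zpow_ne_zero _ hπ0) (zpow_ne_zero _ hε0)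
  have hvW1 : v W1 = ((-n : ℤ) : WithTop ℤ) := by
    rw [hW1def, hv_mul, v_zpow v hv_top hv_mul hπ' (-n),
      v_zpow_zero v hv_top hv_mul hvε, add_zero, mul_one]
  have hwd : wdot ε π n = !![0, W1; W1 * aa, 0] := by
    have e1 : π ^ (-n) * π ^ (2 * n) = π ^ n := by
      rw [← zpow_add₀ hπ0]; congr 1; ring
    have e2 : ε ^ (-((n + 1) / 2)) * ε ^ n = ε ^ (n / 2) := by
      rw [← zpow_add₀ hε0]; congr 1; omega
    have hprod : W1 * aa = π ^ n * ε ^ (n / 2) := by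
      calc W1 * aa = (π ^ (-n) * π ^ (2 * n)) * (ε ^ (-((n + 1) / 2)) * ε ^ n) := by
            rw [hW1def, haa]; ring
      _ = π ^ n * ε ^ (n / 2) := by rw [e1, e2]
    unfold wdot e0
    rw [Matrix.mul_fin_two]
    exact mat2_eq (by ring) (by rw [hW1def]; ring) (by rw [hprod]; ring) (by ring)
  have hPel_eq : ∀ r : E, Pel τ ε π n r = 1 + aa * r * τ r := by
    intro r; rw [haa]; rfl
  have hPelv : ∀ r : E, (0 : WithTop ℤ) ≤ v r → v (Pel τ ε π n r) = 0 := by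
    intro r hr
    rw [hPel_eq r]
    apply v_one_add v hv_top hv_mul hv_add
    rw [hv_mul, hv_mul, hvaa, hv_tau]
    have h6 : (0 : WithTop ℤ) < ((2 * n : ℤ) : WithTop ℤ) := by exact_mod_cast (by omega : (0:ℤ) < 2*n)
    exact add_pos_of_pos_of_nonneg (add_pos_of_pos_of_nonneg h6 hr) hr
  have himat : ∀ t r : E, Pel τ ε π n r ≠ 0 →
      imat τ ε π n t r = (Pel τ ε π n r)⁻¹ • !![t, r * τ t; aa * τ r * t, τ t] := by
    intro t r hP0
    have hP := hPel_eq r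
    unfold imat ep em e0
    rw [Matrix.mul_fin_two, Matrix.mul_fin_two, smul_mat2, ← haa]
    rw [hP] at hP0
    refine mat2_eq ?_ ?_ ?_ ?_
    · rw [hP]
      field_simp
      linear_combination (-t) * mul_inv_cancel₀
        (show (1 + r * aa * τ r) ≠ 0 by rw [show r * aa = aa * r by ring]; exact hP0) +
        t * (r * aa * τ r) * (1 + r * aa * τ r)⁻¹ * h2
    · ring
    · ring
    · ring
  have hdiv1 : (2 * m + 1 + 1) / 2 = m + 1 := by omega
  have hdiv2 : (2 * m + 1) / 2 = m := by omega
  have hm1 : (0 : WithTop ℤ) ≤ ((m + 1 : ℤ) : WithTop ℤ) := by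
    exact_mod_cast (by omega : (0:ℤ) ≤ m + 1)
  constructor
  · -- (1) → (2)
    rintro ⟨j₁, hj₁mem, j₂, hj₂mem, heq⟩
    obtain ⟨A, B, C, D, heta⟩ : ∃ a b c d : E, h = !![a, b; c, d] :=
      ⟨_, _, _, _, Matrix.eta_fin_two h⟩
    subst heta
    subst hg
    obtain ⟨hvA, hvB, hvC, hvD⟩ : v A = 0 ∧ (0 : WithTop ℤ) ≤ v B ∧
        (1 : WithTop ℤ) ≤ v C ∧ v D = 0 := by
      simpa [IwE] using hh
    have hA0 : A ≠ 0 := v_ne_zero v hv_top hv_mul hvA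
    have hD0 : D ≠ 0 := v_ne_zero v hv_top hv_mul hvD
    have hτD0 : τ D ≠ 0 := hτ0 D hD0
    have hτz0 : τ z ≠ 0 := hτ0 z hz
    have hvAD : v (A * D) = 0 := by rw [hv_mul, hvA, hvD, add_zero]
    have hvBCpos : (0 : WithTop ℤ) < v (B * C) := by
      rw [hv_mul]
      calc (0 : WithTop ℤ) < 1 := by norm_num
      _ = 0 + 1 := by rw [zero_add]
      _ ≤ v B + v C := add_le_add hvB hvC
    have hvDh : v (A * D - B * C) = 0 := by
      rw [CharTwo.sub_eq_add, v_add_eq_left v hv_top hv_mul hv_add (by rw [hvAD]; exact hvBCpos)]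
      exact hvAD
    have hDh0 : A * D - B * C ≠ 0 := v_ne_zero v hv_top hv_mul hvDh
    have hτDh0 : τ (A * D - B * C) ≠ 0 := hτ0 _ hDh0
    have hvτDh : v (τ (A * D - B * C)) = 0 := by rw [hv_tau]; exact hvDh
    have hginv : (z • !![A, B; C, D])⁻¹ = (z * (A * D - B * C))⁻¹ • !![D, B; C, A] := by
      apply Matrix.inv_eq_right_inv
      rw [Matrix.smul_mul, Matrix.mul_smul, smul_smul, Matrix.mul_fin_two, Matrix.one_fin_two,
        smul_mat2]
      refine mat2_eq ?_ ?_ ?_ ?_ <;> field_simp [hDh0]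
      · linear_combination B * C * h2
      · linear_combination A * B * h2
      · linear_combination C * D * h2
      · linear_combination B * C * h2
    have hgτ : ((z • !![A, B; C, D]).map τ) = τ z • !![τ A, τ B; τ C, τ D] := by
      rw [smul_mat2, map_mat2, smul_mat2]
      exact mat2_eq (by rw [_root_.map_mul]) (by rw [_root_.map_mul]) (by rw [_root_.map_mul])
        (by rw [_root_.map_mul])
    rw [hginv, hgτ, hwd, Matrix.smul_mul, Matrix.smul_mul, Matrix.mul_smul, smul_smul,
      Matrix.mul_fin_two, Matrix.mul_fin_two, smul_mat2] at heq
    have e01 := congrFun (congrFun heq 0) 1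
    have e11 := congrFun (congrFun heq 1) 1
    simp only [Matrix.mul_apply, Fin.sum_univ_two, Matrix.cons_val', Matrix.cons_val_zero,
      Matrix.cons_val_one, Matrix.head_cons, Matrix.empty_val', Matrix.cons_val_fin_one,
      Matrix.head_fin_const, Matrix.of_apply] at e01 e11
    field_simp [hz, hτz0, hDh0] at e01 e11
    obtain ⟨hj₁00, hj₁01, hj₁10, hj₁11⟩ := hj₁mem
    obtain ⟨hj₂00, hj₂01, hj₂10, hj₂11⟩ := hj₂mem
    rw [hdiv1] at hj₁00 hj₁11 hj₂00 hj₂11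
    rw [hdiv2] at hj₁01 hj₁10 hj₂01 hj₂10
    have hvj₁11 : (0 : WithTop ℤ) ≤ v (j₁ 1 1) :=
      v_nonneg_of_sub_one v hv_top hv_mul hv_add hm1 hj₁11
    have hvj₂11 : (0 : WithTop ℤ) ≤ v (j₂ 1 1) :=
      v_nonneg_of_sub_one v hv_top hv_mul hv_add hm1 hj₂11
    have hvj₁00 : (0 : WithTop ℤ) ≤ v (j₁ 0 0) :=
      v_nonneg_of_sub_one v hv_top hv_mul hv_add hm1 hj₁00
    -- the two key equations
    have eI' : W1 * (τ z * z⁻¹ * (A * D - B * C)⁻¹ * (D * τ D + aa * (B * τ B))) =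
        W1 * (aa * (j₁ 0 1 * j₂ 0 1) + j₁ 0 0 * j₂ 1 1) := by
      field_simp [hDh0]
      exact mul_left_cancel₀ hW10 (by linear_combination e01)
    have eI := mul_left_cancel₀ hW10 eI'
    have eIII' : W1 * (aa * (A * τ B) + C * τ D) =
        W1 * ((z * (τ z)⁻¹ * (A * D - B * C)) *
          (aa * (j₁ 1 1 * j₂ 0 1) + j₁ 1 0 * j₂ 1 1)) := by
      field_simp [hτz0]
      exact mul_left_cancel₀ hW10 (by linear_combination e11)
    have eIII := mul_left_cancel₀ hW10 eIII'
    have hvzτz : v (z * (τ z)⁻¹) = 0 := by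
      rw [hv_mul, show v z = v (τ z) from (hv_tau z).symm, ← hv_mul,
        mul_inv_cancel₀ hτz0]
      exact v_one' v hv_top hv_mul
    have hvu' : v (z * (τ z)⁻¹ * (A * D - B * C)) = 0 := by
      rw [hv_mul, hvzτz, hvDh, add_zero]
    have hIII : ((m + 1 : ℤ) : WithTop ℤ) ≤ v (aa * (A * τ B) + C * τ D) := by
      rw [eIII, hv_mul, hvu', zero_add]
      refine v_ge_add v hv_add ?_ ?_
      · calc ((m + 1 : ℤ) : WithTop ℤ) ≤ ((2 * n + (0 + m) : ℤ) : WithTop ℤ) := by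
              exact_mod_cast (by omega : (m + 1 : ℤ) ≤ 2 * n + (0 + m))
        _ ≤ v (aa * (j₁ 1 1 * j₂ 0 1)) :=
          v_mul_ge v hv_mul (le_of_eq hvaa.symm) (v_mul_ge v hv_mul hvj₁11 hj₂01)
      · calc ((m + 1 : ℤ) : WithTop ℤ) = ((m + 1 + 0 : ℤ) : WithTop ℤ) := by norm_num
        _ ≤ v (j₁ 1 0 * j₂ 1 1) := v_mul_ge v hv_mul hj₁10 hvj₂11
    have hI : ((m + 1 : ℤ) : WithTop ℤ) ≤
        v (τ z * z⁻¹ * (A * D - B * C)⁻¹ * (D * τ D + aa * (B * τ B)) - 1) := by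
      rw [eI]
      have hsplit : aa * (j₁ 0 1 * j₂ 0 1) + j₁ 0 0 * j₂ 1 1 - 1 =
          aa * (j₁ 0 1 * j₂ 0 1) + (j₁ 0 0 * j₂ 1 1 - 1) := by ring
      rw [hsplit]
      refine v_ge_add v hv_add ?_ (v_unit_mul_sub_one v hv_top hv_mul hv_add hm1 hj₁00 hj₂11)
      calc ((m + 1 : ℤ) : WithTop ℤ) ≤ ((2 * n + (m + m) : ℤ) : WithTop ℤ) := by
            exact_mod_cast (by omega : (m + 1 : ℤ) ≤ 2 * n + (m + m))
      _ ≤ v (aa * (j₁ 0 1 * j₂ 0 1)) :=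
        v_mul_ge v hv_mul (le_of_eq hvaa.symm) (v_mul_ge v hv_mul hj₁01 hj₂01)
    -- construct t, r, j
    have hvS : v (D * τ D + aa * (B * τ B)) = 0 := by
      rw [v_add_eq_left v hv_top hv_mul hv_add, hv_mul, hvD, hv_tau, hvD, add_zero]
      rw [hv_mul, hvD, hv_tau, hvD, add_zero]
      calc (0 : WithTop ℤ) < ((2 * n + (0 + 0) : ℤ) : WithTop ℤ) := by
            exact_mod_cast (by omega : (0:ℤ) < 2 * n + (0 + 0))
      _ ≤ v (aa * (B * τ B)) :=
        v_mul_ge v hv_mul (le_of_eq hvaa.symm)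
          (v_mul_ge v hv_mul (by exact_mod_cast hvB) (by rw [hv_tau]; exact_mod_cast hvB))
    have hS0 : D * τ D + aa * (B * τ B) ≠ 0 := v_ne_zero v hv_top hv_mul hvS
    have ht0 : z * (A * D - B * C) / D ≠ 0 := div_ne_zero (mul_ne_zero hz hDh0) hD0
    have hvrr : (0 : WithTop ℤ) ≤ v (B / D) := by
      rw [div_eq_mul_inv, hv_mul, v_inv_zero v hv_top hv_mul hvD, add_zero]; exact hvB
    have hP0 : Pel τ ε π n (B / D) ≠ 0 := v_ne_zero v hv_top hv_mul (hPelv _ hvrr)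
    have hτDhexp : τ (A * D - B * C) = τ A * τ D - τ B * τ C := by
      rw [map_sub, _root_.map_mul, _root_.map_mul]
    have hτDhexp0 : τ A * τ D - τ B * τ C ≠ 0 := by rw [← hτDhexp]; exact hτDh0
    have hPS : Pel τ ε π n (B / D) * (D * τ D) = D * τ D + aa * (B * τ B) := by
      rw [hPel_eq, map_div₀]
      field_simp
    refine ⟨z * (A * D - B * C) / D, B / D, ht0, hvrr,
      !![1, 0; z * (τ z)⁻¹ * (τ (A * D - B * C))⁻¹ * (aa * (A * τ B) + C * τ D),
         z * (τ z)⁻¹ * (τ (A * D - B * C))⁻¹ * (D * τ D + aa * (B * τ B))], ?_, ?_⟩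
    · -- membership of j
      simp only [IEr, Set.mem_setOf_eq, Matrix.cons_val', Matrix.cons_val_zero,
        Matrix.cons_val_one, Matrix.head_cons, Matrix.empty_val', Matrix.cons_val_fin_one,
        Matrix.head_fin_const, Matrix.of_apply]
      rw [hdiv1, hdiv2]
      refine ⟨?_, ?_, ?_, ?_⟩
      · rw [sub_self, v_zero' v hv_top]; exact le_top
      · rw [v_zero' v hv_top]; exact le_top
      · rw [hv_mul, hv_mul, hvzτz, v_inv_zero v hv_top hv_mul hvτDh, add_zero, zero_add]
        exact hIII
      · have hJeq : z * (τ z)⁻¹ * (τ (A * D - B * C))⁻¹ * (D * τ D + aa * (B * τ B)) =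
            τ (τ z * z⁻¹ * (A * D - B * C)⁻¹ * (D * τ D + aa * (B * τ B))) := by
          simp only [_root_.map_mul, map_inv₀, map_add, hττ, hτaa]
          ring
        rw [hJeq, ← _root_.map_one τ, ← map_sub, hv_tau]
        exact hI
    · -- g = imat * j
      rw [himat _ _ hP0, Matrix.smul_mul, eq_comm, inv_smul_eq_iff₀ hP0, smul_smul,
        Matrix.mul_fin_two, smul_mat2]
      refine mat2_eq ?_ ?_ ?_ ?_ <;>
        simp only [map_div₀, _root_.map_mul, hτDhexp] <;>
        field_simp [hτz0, hτDhexp0, hP0]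
      · linear_combination (-A) * hPS
      · linear_combination (-B) * hPS
      · linear_combination D * (aa * τ B * A + τ D * C) * (mul_inv_cancel₀ (show τ D * τ A - τ B * τ C ≠ 0 by rw [mul_comm (τ D) (τ A)]; exact hτDhexp0)) +
          (-C) * hPS + aa * τ B * (A * D - B * C) * h2
      · linear_combination D * (τ D * D + aa * τ B * B) * (mul_inv_cancel₀ (show τ D * τ A - τ B * τ C ≠ 0 by rw [mul_comm (τ D) (τ A)]; exact hτDhexp0)) + (-D) * hPS
  · rintro ⟨t, r, ht0, hvr, j, hjmem, hgij⟩
    have hPv : v (Pel τ ε π n r) = 0 := hPelv r hvr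
    have hP0 : Pel τ ε π n r ≠ 0 := v_ne_zero v hv_top hv_mul hPv
    have hP := hPel_eq r
    have hτt0 : τ t ≠ 0 := hτ0 t ht0
    have hτP : τ (Pel τ ε π n r) = Pel τ ε π n r := by
      rw [hP, map_add, _root_.map_one, _root_.map_mul, _root_.map_mul, hτaa, hττ]
      ring
    have hi := himat t r hP0
    have hτi : (imat τ ε π n t r).map τ
        = (Pel τ ε π n r)⁻¹ • !![τ t, τ r * t; aa * r * τ t, t] := by
      rw [hi, smul_mat2, map_mat2, smul_mat2]
      refine mat2_eq ?_ ?_ ?_ ?_ <;>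
        (simp only [_root_.map_mul, map_inv₀, hτP, hτaa, hττ]; try ring)
    set iv : Matrix (Fin 2) (Fin 2) E :=
      !![t⁻¹, r * t⁻¹; aa * τ r * (τ t)⁻¹, (τ t)⁻¹] with hivdef
    have hP0' : (1 : E) + aa * r * τ r ≠ 0 := by rw [← hP]; exact hP0
    have hii' : imat τ ε π n t r * iv = 1 := by
      rw [hi, Matrix.smul_mul, hivdef, Matrix.mul_fin_two, Matrix.one_fin_two, smul_mat2]
      refine mat2_eq ?_ ?_ ?_ ?_ <;> rw [hP] <;> field_simp [hP0']
      · linear_combination r * h2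
      · linear_combination aa * τ r * h2
      · ring
    have hiinv : (imat τ ε π n t r)⁻¹ = iv := Matrix.inv_eq_right_inv hii'
    have hiw : iv * wdot ε π n * ((imat τ ε π n t r).map τ) = wdot ε π n := by
      rw [hτi, hwd, hivdef, Matrix.mul_smul, Matrix.mul_fin_two, Matrix.mul_fin_two, smul_mat2]
      refine mat2_eq ?_ ?_ ?_ ?_ <;> rw [hP] <;> field_simp [hP0']
      · linear_combination r * W1 * aa * τ t * h2
      · ring
      · ring
      · linear_combination W1 * aa * τ r * t * h2
    obtain ⟨hj00, hj01, hj10, hj11⟩ := hjmem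
    rw [hdiv1] at hj00 hj11
    rw [hdiv2] at hj01 hj10
    set δ := j 0 0 * j 1 1 - j 0 1 * j 1 0 with hδdef
    have hδ1 : ((m + 1 : ℤ) : WithTop ℤ) ≤ v (δ - 1) := by
      have hstep : δ - 1 = (j 0 0 * j 1 1 - 1) + j 0 1 * j 1 0 := by
        rw [hδdef, sub_right_comm, CharTwo.sub_eq_add]
      rw [hstep]
      refine v_ge_add v hv_add (v_unit_mul_sub_one v hv_top hv_mul hv_add hm1 hj00 hj11) ?_
      calc ((m + 1 : ℤ) : WithTop ℤ) ≤ ((m + (m + 1) : ℤ) : WithTop ℤ) := by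
            exact_mod_cast (by omega : (m+1:ℤ) ≤ m + (m+1))
      _ ≤ v (j 0 1 * j 1 0) := v_mul_ge v hv_mul hj01 hj10
    have hvδ : v δ = 0 := by
      have hee : δ = 1 + (δ - 1) := by ring
      rw [hee]
      apply v_one_add v hv_top hv_mul hv_add
      exact lt_of_lt_of_le (by exact_mod_cast (by omega : (0:ℤ) < m+1)) hδ1
    have hδ0 : δ ≠ 0 := v_ne_zero v hv_top hv_mul hvδ
    have hjdet : j.det = δ := by rw [Matrix.det_fin_two, hδdef]
    have hjinv : j⁻¹ = δ⁻¹ • !![j 1 1, -(j 0 1); -(j 1 0), j 0 0] := by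
      rw [Matrix.inv_def, Matrix.adjugate_fin_two, hjdet, Ring.inverse_eq_inv']
    have hvδi : v δ⁻¹ = 0 := v_inv_zero v hv_top hv_mul hvδ
    have hmem1 : j⁻¹ ∈ IEr v (2 * m + 1) := by
      rw [hjinv, smul_mat2]
      simp only [IEr, Set.mem_setOf_eq, Matrix.cons_val', Matrix.cons_val_zero,
        Matrix.cons_val_one, Matrix.head_cons, Matrix.empty_val', Matrix.cons_val_fin_one,
        Matrix.head_fin_const, Matrix.of_apply]
      rw [hdiv1, hdiv2]
      refine ⟨?_, ?_, ?_, ?_⟩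
      · have e : δ⁻¹ * j 1 1 - 1 = δ⁻¹ * ((j 1 1 - 1) + (δ - 1)) := by
          field_simp
          linear_combination (1 - j 1 1 * j 0 0 + j 0 1 * j 1 0) * h2
        rw [e, hv_mul, hvδi, zero_add]
        exact v_ge_add v hv_add hj11 hδ1
      · rw [hv_mul, hvδi, zero_add, CharTwo.neg_eq]; exact hj01
      · rw [hv_mul, hvδi, zero_add, CharTwo.neg_eq]; exact hj10
      · have e : δ⁻¹ * j 0 0 - 1 = δ⁻¹ * ((j 0 0 - 1) + (δ - 1)) := by
          field_simp
          linear_combination (1 - j 0 0 * j 1 1 + j 0 1 * j 1 0) * h2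
        rw [e, hv_mul, hvδi, zero_add]
        exact v_ge_add v hv_add hj00 hδ1
    have hmem2 : j.map τ ∈ IEr v (2 * m + 1) := by
      simp only [IEr, Set.mem_setOf_eq, Matrix.map_apply]
      rw [hdiv1, hdiv2]
      have e1 : τ (j 0 0) - 1 = τ (j 0 0 - 1) := by rw [map_sub, _root_.map_one]
      have e2 : τ (j 1 1) - 1 = τ (j 1 1 - 1) := by rw [map_sub, _root_.map_one]
      exact ⟨by rw [e1, hv_tau]; exact hj00, by rw [hv_tau]; exact hj01,
        by rw [hv_tau]; exact hj10, by rw [e2, hv_tau]; exact hj11⟩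
    refine ⟨j⁻¹, hmem1, j.map τ, hmem2, ?_⟩
    rw [hgij, Matrix.map_mul, Matrix.mul_inv_rev, hiinv]
    calc j⁻¹ * iv * wdot ε π n * ((imat τ ε π n t r).map τ * j.map τ)
        = j⁻¹ * (iv * wdot ε π n * (imat τ ε π n t r).map τ) * j.map τ := by
          simp only [Matrix.mul_assoc]
    _ = j⁻¹ * wdot ε π n * j.map τ := by rw [hiw]


end ADLV
end
end

section
/- (Action of the twisted left multiplication by ι(π) on the coordinates.) Assume n ≥ 1, 2n > d and m = 2n + d − 1. Let a′ ∈ U_E, set a := π·a′ and R := π^{−(d+1)}·(τ(a) + a), and let B ∈ p_E, C, D ∈ U_E satisfy B + πⁿ·R⁻¹ ∈ p_E^{m+1} and ε^{(d+1)/2}·R⁻¹·D⁻¹·τ(C) ∈ U_E^{m+1}. Set x := e₋(a)·v̇·e₋(B)·e₀(C, D). Then a′ + 1 + ε ∈ U_E, and there exist B″ ∈ p_E, D″ ∈ U_E and j ∈ I_E^{2m+1} such that ι(π)·x·e₀(π, τ(π))⁻¹ = e₋(ε·π·(a′ + 1 + ε)⁻¹)·v̇·e₋(B″)·e₀(ε·C·(a′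 + 1 + ε)⁻¹, D″)·j. -/
open Matrix

noncomputable section

namespace ADLV

variable {E : Type*} [Field E]

private lemma fin2_ext {α : Type*} {a b c d a' b' c' d' : α}
    (h₁ : a = a') (h₂ : b = b') (h₃ : c = c') (h₄ : d = d') :
    !![a, b; c, d] = !![a', b'; c', d'] := by rw [h₁, h₂, h₃, h₄]

theorem statement13 [CharP E 2]
    (τ : E →+* E) (hττ : ∀ x : E, τ (τ x) = x) (hτne : τ ≠ RingHom.id E)
    (v : E → WithTop ℤ)
    (hv_top : ∀ x : E, v x = ⊤ ↔ x = 0)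
    (hv_mul : ∀ x y : E, v (x * y) = v x + v y)
    (hv_add : ∀ x y : E, min (v x) (v y) ≤ v (x + y))
    (hv_tau : ∀ x : E, v (τ x) = v x)
    (π : E) (hπ : v π = 1)
    (hv_even : ∀ x : E, τ x = x → ∀ k : ℤ, v x = (k : WithTop ℤ) → Even k)
    (hbasis : ∀ y : E, ∃ c₀ c₁ : E, τ c₀ = c₀ ∧ τ c₁ = c₁ ∧ y = c₀ + c₁ * π)
    (d : ℤ) (hd : 0 < d) (hdodd : Odd d)
    (ε : E) (hε : ε = τ π / π)
    (hεd : v (ε - 1) = (d : WithTop ℤ))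
    (Δ : E) (hΔ : Δ = π + τ π) (ϖ : E) (hϖ : ϖ = π * τ π)
    (n m : ℤ) (hn : 1 ≤ n) (h2n : d < 2 * n) (hm : m = 2 * n + d - 1)
    (a' : E) (ha' : v a' = 0) (a : E) (ha : a = π * a')
    (R : E) (hR : R = π ^ (-(d + 1)) * (τ a + a))
    (B : E) (hB : (1 : WithTop ℤ) ≤ v B) (C : E) (hC : v C = 0) (D : E) (hD : v D = 0)
    (hBR : ((m + 1 : ℤ) : WithTop ℤ) ≤ v (B + π ^ n * R⁻¹))
    (hCD : ((m + 1 : ℤ) : WithTop ℤ) ≤ v (ε ^ ((d + 1) / 2) * R⁻¹ * D⁻¹ * τ C - 1))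
    (x : Matrix (Fin 2) (Fin 2) E) (hx : x = em a * vdot π n d * em B * e0 C D) :
    v (a' + 1 + ε) = 0 ∧
    ∃ B'' D'' : E, (1 : WithTop ℤ) ≤ v B'' ∧ v D'' = 0 ∧
      ∃ j ∈ IEr v (2 * m + 1),
        iota Δ ϖ 0 1 * x * (e0 π (τ π))⁻¹ =
          em (ε * π * (a' + 1 + ε)⁻¹) * vdot π n d * em B'' *
            e0 (ε * C * (a' + 1 + ε)⁻¹) D'' * j := by
  obtain ⟨t, ht⟩ := hdodd
  have h2 : (2 : E) = 0 := by
    have := CharP.cast_eq_zero E 2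
    exact_mod_cast this
  -- basic valuation facts
  have hvzero : v 0 = ⊤ := (hv_top 0).mpr rfl
  have hne : ∀ (y : E) (c : ℤ), v y = (c : WithTop ℤ) → y ≠ 0 := by
    intro y c h hy
    rw [hy, hvzero] at h
    exact WithTop.top_ne_coe h
  have hπ0 : π ≠ 0 := by
    intro h
    rw [h, hvzero] at hπ
    exact WithTop.top_ne_one hπ
  have hv1 : v (1 : E) = ((0 : ℤ) : WithTop ℤ) := by
    have h := hv_mul 1 1
    rw [one_mul] at h
    rcases h1 : v (1 : E) with _ | b
    · exact absurd ((hv_top 1).mp h1) one_ne_zero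
    · rw [WithTop.some_eq_coe] at h1
      rw [h1] at h
      have hb : b = b + b := by exact_mod_cast h
      have hb0 : b = 0 := by omega
      rw [hb0]
      rfl
  have hvinv : ∀ (y : E) (c : ℤ), v y = (c : WithTop ℤ) → v y⁻¹ = ((-c : ℤ) : WithTop ℤ) := by
    intro y c h
    have hy0 : y ≠ 0 := hne y c h
    have hmul := hv_mul y y⁻¹
    rw [mul_inv_cancel₀ hy0, hv1, h] at hmul
    rcases h1 : v y⁻¹ with _ | b
    · exact absurd ((hv_top _).mp h1) (inv_ne_zero hy0)
    · rw [WithTop.some_eq_coe] at h1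
      rw [h1] at hmul
      have hb : (0 : ℤ) = c + b := by exact_mod_cast hmul
      have hbc : b = -c := by omega
      rw [hbc]
      rfl
  have hvpow : ∀ k : ℕ, v (π ^ k) = ((k : ℤ) : WithTop ℤ) := by
    intro k
    induction k with
    | zero => simpa using hv1
    | succ k ih =>
      rw [pow_succ, hv_mul, ih, hπ]
      norm_cast
  have hvzpow : ∀ k : ℤ, v (π ^ k) = (k : WithTop ℤ) := by
    intro k
    rcases k with k | k
    · rw [Int.ofNat_eq_coe, zpow_natCast]
      exact hvpow k
    · rw [zpow_negSucc]
      have := hvinv (π ^ (k + 1)) (k + 1) (by exact_mod_cast hvpow (k + 1))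
      rw [this]
      congr 1
  -- τ π = ε * π
  have hτπ : τ π = ε * π := by
    rw [hε]; field_simp
  have hvτπ : v (τ π) = 1 := by rw [hv_tau]; exact hπ
  have hvε : v ε = ((0 : ℤ) : WithTop ℤ) := by
    have h := hv_mul ε π
    rw [← hτπ, hvτπ, hπ] at h
    rcases h1 : v ε with _ | b
    · have hez : ε = 0 := (hv_top ε).mp h1
      rw [hez, zero_mul] at hτπ
      rw [hτπ, hvzero] at hvτπ
      exact absurd hvτπ WithTop.top_ne_one
    · rw [WithTop.some_eq_coe] at h1
      rw [h1] at h
      have hb : (1 : ℤ) = b + 1 := by exact_mod_cast h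
      have hb0 : b = 0 := by omega
      rw [hb0]
      rfl
  have hε0 : ε ≠ 0 := hne ε 0 hvε
  have hτπ0 : τ π ≠ 0 := by rw [hτπ]; exact mul_ne_zero hε0 hπ0
  -- v S = 0
  have hSa : a' + 1 + ε = a' + (ε - 1) := by linear_combination h2
  have hd' : (0 : WithTop ℤ) < ((d : ℤ) : WithTop ℤ) := by exact_mod_cast hd
  have hS : v (a' + 1 + ε) = 0 := by
    have hlow : (0 : WithTop ℤ) ≤ v (a' + 1 + ε) := by
      rw [hSa]
      refine le_trans ?_ (hv_add a' (ε - 1))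
      rw [ha', hεd]
      exact le_min le_rfl (le_of_lt hd')
    have hrec : (a' + 1 + ε) + (ε - 1) = a' := by linear_combination ε * h2
    have hhigh := hv_add (a' + 1 + ε) (ε - 1)
    rw [hrec, ha', hεd] at hhigh
    rcases min_le_iff.mp hhigh with h | h
    · exact le_antisymm h hlow
    · exact absurd h (not_le.mpr hd')
  have hS0 : a' + 1 + ε ≠ 0 := hne _ 0 hS
  refine ⟨hS, ?_⟩
  set S := a' + 1 + ε with hSdef
  -- witnesses
  refine ⟨S * (π ^ (d + n) + S * B) * ε⁻¹, S * D * ε⁻¹, ?_, ?_, ?_⟩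
  · -- v B'' ≥ 1
    have h1 : v (π ^ (d + n) + S * B) ≥ (1 : WithTop ℤ) := by
      refine le_trans ?_ (hv_add _ _)
      refine le_min ?_ ?_
      · rw [hvzpow]
        exact_mod_cast (by omega : (1 : ℤ) ≤ d + n)
      · rw [hv_mul, hS, zero_add]
        exact hB
    rw [hv_mul, hv_mul, hS, hvinv ε 0 hvε, zero_add]
    calc (1 : WithTop ℤ) = 1 + ((-(0:ℤ) : ℤ) : WithTop ℤ) := by norm_num
      _ ≤ v (π ^ (d + n) + S * B) + ((-(0:ℤ) : ℤ) : WithTop ℤ) := by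
          exact add_le_add_left h1 _
  · -- v D'' = 0
    rw [hv_mul, hv_mul, hS, hD, hvinv ε 0 hvε]
    norm_num
  · refine ⟨1, ⟨?_, ?_, ?_, ?_⟩, ?_⟩
    · rw [Matrix.one_apply_eq, sub_self, hvzero]; exact le_top
    · rw [Matrix.one_apply_ne (by decide), hvzero]; exact le_top
    · rw [Matrix.one_apply_ne (by decide), hvzero]; exact le_top
    · rw [Matrix.one_apply_eq, sub_self, hvzero]; exact le_top
    -- the matrix identity
    have he0inv : (e0 π (τ π))⁻¹ = e0 π⁻¹ (τ π)⁻¹ := by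
      refine Matrix.inv_eq_right_inv ?_
      rw [e0, e0, Matrix.mul_fin_two, Matrix.one_fin_two]
      refine fin2_ext ?_ ?_ ?_ ?_ <;> field_simp <;> simp
    have hstep1 : iota Δ ϖ 0 1 * em a =
        em (ε * π * S⁻¹) * !![π * S, 1; 0, ε * π * S⁻¹] := by
      rw [iota, em, em, ha, hΔ, hϖ, hτπ, Matrix.mul_fin_two, Matrix.mul_fin_two]
      refine fin2_ext ?_ ?_ ?_ ?_
      · rw [hSdef]; ring
      · ring
      · field_simp [hS0]; ring
      · linear_combination (-(ε * π * S⁻¹)) * h2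
    have hstep2 : !![π * S, 1; 0, ε * π * S⁻¹] * vdot π n d =
        vdot π n d * !![ε * π * S⁻¹, 0; π ^ (d + 1 + n), π * S] := by
      have hKL : (π : E) ^ (-((d + 1) / 2 + (n + 1) / 2)) * π ^ (d + 1 + n) =
          π ^ ((d + 1) / 2 + n / 2) := by
        rw [← zpow_add₀ hπ0]
        congr 1
        omega
      rw [vdot, Matrix.mul_fin_two, Matrix.mul_fin_two]
      refine fin2_ext ?_ ?_ ?_ ?_
      · rw [← hKL]; ring
      · ring
      · ring
      · ring
    have hsplit : π ^ (d + 1 + n) = π ^ (d + n) * π := by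
      rw [show d + 1 + n = (d + n) + 1 by ring, zpow_add₀ hπ0, zpow_one]
    have hstep3 : !![ε * π * S⁻¹, 0; π ^ (d + 1 + n), π * S] *
        (em B * (e0 C D * e0 π⁻¹ (τ π)⁻¹)) =
        em (S * (π ^ (d + n) + S * B) * ε⁻¹) * e0 (ε * C * S⁻¹) (S * D * ε⁻¹) := by
      rw [em, em, e0, e0, e0, hτπ, hsplit, Matrix.mul_fin_two, Matrix.mul_fin_two,
        Matrix.mul_fin_two, Matrix.mul_fin_two]
      refine fin2_ext ?_ ?_ ?_ ?_
      · field_simp [hS0, hε0, hπ0]; ring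
      · ring
      · field_simp [hS0, hε0, hπ0]; ring
      · field_simp [hS0, hε0, hπ0]; ring
    rw [hx, he0inv, mul_one]
    calc iota Δ ϖ 0 1 * (em a * vdot π n d * em B * e0 C D) * e0 π⁻¹ (τ π)⁻¹
        = (iota Δ ϖ 0 1 * em a) * (vdot π n d *
            (em B * (e0 C D * e0 π⁻¹ (τ π)⁻¹))) := by
          simp only [Matrix.mul_assoc]
      _ = em (ε * π * S⁻¹) * (!![π * S, 1; 0, ε * π * S⁻¹] * vdot π n d) *
            (em B * (e0 C D * e0 π⁻¹ (τ π)⁻¹)) := by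
          rw [hstep1]; simp only [Matrix.mul_assoc]
      _ = em (ε * π * S⁻¹) * vdot π n d *
            (!![ε * π * S⁻¹, 0; π ^ (d + 1 + n), π * S] *
              (em B * (e0 C D * e0 π⁻¹ (τ π)⁻¹))) := by
          rw [hstep2]; simp only [Matrix.mul_assoc]
      _ = em (ε * π * S⁻¹) * vdot π n d *
            (em (S * (π ^ (d + n) + S * B) * ε⁻¹) * e0 (ε * C * S⁻¹) (S * D * ε⁻¹)) := by
          rw [hstep3]
      _ = em (ε * π * S⁻¹) * vdot π n d * em (S * (π ^ (d + n) + S * B) * ε⁻¹) *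
            e0 (ε * C * S⁻¹) (S * D * ε⁻¹) := by
          simp only [Matrix.mul_assoc]

end ADLV
end
end

section
/- (Action of the Iwahori subgroup I_F on the coordinates.) Assume n ≥ 1, 2n > d and m = 2n + d − 1. Let g = [[g₁, g₂],[g₃, g₄]] ∈ I_F. Let a ∈ E with v(a) = 1, set R := π^{−(d+1)}·(τ(a) + a), and let B ∈ p_E, C, D ∈ U_E satisfy B + πⁿ·R⁻¹ ∈ p_E^{m+1} and ε^{(d+1)/2}·R⁻¹·D⁻¹·τ(C) ∈ U_E^{m+1}. Set x := e₋(a)·v̇·e₋(B)·e₀(C, D). Then g₂·a + g₁ ∈ U_E, and there exist B′ ∈ p_E, D′ ∈ U_E and j ∈ I_E^{2m+1} such that g·x = e₋((g₄·a + g₃)·(g₂·a + g₁)⁻¹)·v̇·e₋(B′)·e₀(det(g)·C·(g₂·a + g₁)⁻¹, D′)·j. -/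
open Matrix

noncomputable section

namespace ADLV

variable {E : Type*} [Field E]

set_option maxHeartbeats 2000000 in
theorem statement14 [CharP E 2]
    (τ : E →+* E) (hττ : ∀ x : E, τ (τ x) = x) (hτne : τ ≠ RingHom.id E)
    (v : E → WithTop ℤ)
    (hv_top : ∀ x : E, v x = ⊤ ↔ x = 0)
    (hv_mul : ∀ x y : E, v (x * y) = v x + v y)
    (hv_add : ∀ x y : E, min (v x) (v y) ≤ v (x + y))
    (hv_tau : ∀ x : E, v (τ x) = v x)
    (π : E) (hπ : v π = 1)
    (hv_even : ∀ x : E, τ x = x → ∀ k : ℤ, v x = (k : WithTop ℤ) → Even k)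
    (hbasis : ∀ y : E, ∃ c₀ c₁ : E, τ c₀ = c₀ ∧ τ c₁ = c₁ ∧ y = c₀ + c₁ * π)
    (d : ℤ) (hd : 0 < d) (hdodd : Odd d)
    (ε : E) (hε : ε = τ π / π)
    (hεd : v (ε - 1) = (d : WithTop ℤ))
    (n m : ℤ) (hn : 1 ≤ n) (h2n : d < 2 * n) (hm : m = 2 * n + d - 1)
    (g : Matrix (Fin 2) (Fin 2) E) (hg : g ∈ IwE v) (hgF : g.map ⇑τ = g)
    (a : E) (ha : v a = 1)
    (R : E) (hR : R = π ^ (-(d + 1)) * (τ a + a))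
    (B : E) (hB : (1 : WithTop ℤ) ≤ v B) (C : E) (hC : v C = 0) (D : E) (hD : v D = 0)
    (hBR : ((m + 1 : ℤ) : WithTop ℤ) ≤ v (B + π ^ n * R⁻¹))
    (hCD : ((m + 1 : ℤ) : WithTop ℤ) ≤ v (ε ^ ((d + 1) / 2) * R⁻¹ * D⁻¹ * τ C - 1))
    (x : Matrix (Fin 2) (Fin 2) E) (hx : x = em a * vdot π n d * em B * e0 C D) :
    v (g 0 1 * a + g 0 0) = 0 ∧
    ∃ B' D' : E, (1 : WithTop ℤ) ≤ v B' ∧ v D' = 0 ∧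
      ∃ j ∈ IEr v (2 * m + 1),
        g * x = em ((g 1 1 * a + g 1 0) * (g 0 1 * a + g 0 0)⁻¹) * vdot π n d * em B' *
          e0 (g.det * C * (g 0 1 * a + g 0 0)⁻¹) D' * j := by
  obtain ⟨hg1, hg2, hg3, hg4⟩ := hg
  have hπ0 : π ≠ 0 := by
    intro h
    rw [(hv_top π).mpr h] at hπ
    simp at hπ
  have h1 : v 1 = 0 := by
    have h := hv_mul 1 1
    rw [one_mul] at h
    have hne : v 1 ≠ ⊤ := fun h' => one_ne_zero ((hv_top 1).mp h')
    obtain ⟨j, hj⟩ := WithTop.ne_top_iff_exists.mp hne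
    rw [← hj] at h ⊢
    have hj' : j = j + j := by exact_mod_cast h
    have hj0 : j = 0 := by omega
    simp [hj0]
  have hne_of_v : ∀ (y : E) (k : ℤ), v y = (k : WithTop ℤ) → y ≠ 0 := by
    intro y k hk h
    rw [h, (hv_top 0).mpr rfl] at hk
    simp at hk
  have hvinv : ∀ (y : E) (k : ℤ), v y = (k : WithTop ℤ) → v y⁻¹ = ((-k : ℤ) : WithTop ℤ) := by
    intro y k hk
    have hy0 : y ≠ 0 := hne_of_v y k hk
    have hne : v y⁻¹ ≠ ⊤ := fun h' => (inv_ne_zero hy0) ((hv_top _).mp h')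
    obtain ⟨j, hj⟩ := WithTop.ne_top_iff_exists.mp hne
    have h := hv_mul y y⁻¹
    rw [mul_inv_cancel₀ hy0, h1, hk, ← hj] at h
    have h' : (0 : ℤ) = k + j := by exact_mod_cast h
    rw [← hj]
    exact_mod_cast (by omega : j = -k)
  have hznat : ∀ k : ℕ, v (π ^ k) = ((k : ℤ) : WithTop ℤ) := by
    intro k
    induction k with
    | zero => simpa using h1
    | succ k ih =>
      rw [pow_succ, hv_mul, ih, hπ]
      norm_cast
  have hzpow : ∀ k : ℤ, v (π ^ k) = (k : WithTop ℤ) := by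
    intro k
    obtain ⟨k', hk' | hk'⟩ := k.eq_nat_or_neg
    · subst hk'; rw [zpow_natCast]; exact hznat k'
    · subst hk'
      rw [_root_.zpow_neg, zpow_natCast]
      have := hvinv _ _ (hznat k')
      rw [this]
    -- goal: ↑(-(k':ℤ)) = ↑(-(k':ℤ)) possibly with cast mismatch
  have hv_add_eq : ∀ y z : E, v y < v z → v (y + z) = v y := by
    intro y z hlt
    refine le_antisymm ?_ (le_trans (le_of_eq (min_eq_left hlt.le).symm) (hv_add y z))
    by_contra hc
    push_neg at hc
    have hy : y = (y + z) + z := by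
      rw [add_assoc, CharTwo.add_self_eq_zero, add_zero]
    have h := hv_add (y + z) z
    rw [← hy] at h
    exact absurd h (not_le.mpr (lt_min hc hlt))
  -- valuation of u := g 0 1 * a + g 0 0
  have hlt01 : v (g 0 0) < v (g 0 1 * a) := by
    rw [hg1, hv_mul, ha]
    have h' : (1 : WithTop ℤ) ≤ v (g 0 1) + 1 := le_add_of_nonneg_left hg2
    exact lt_of_lt_of_le zero_lt_one h'
  have hu : v (g 0 1 * a + g 0 0) = 0 := by
    rw [add_comm, hv_add_eq _ _ hlt01]
    exact hg1
  have hu0 : g 0 1 * a + g 0 0 ≠ 0 := hne_of_v _ 0 (by exact_mod_cast hu)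
  have hui : v (g 0 1 * a + g 0 0)⁻¹ = 0 := by
    have := hvinv _ 0 (by exact_mod_cast hu)
    simpa using this
  -- valuation of the determinant
  have hltdet : v (g 0 0 * g 1 1) < v (g 0 1 * g 1 0) := by
    rw [hv_mul, hv_mul, hg1, hg4]
    have h' : (1 : WithTop ℤ) ≤ v (g 0 1) + v (g 1 0) := by
      calc (1 : WithTop ℤ) = 0 + 1 := by norm_num
      _ ≤ v (g 0 1) + v (g 1 0) := add_le_add hg2 hg3
    simpa using lt_of_lt_of_le zero_lt_one h'
  have hdet : v g.det = 0 := by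
    rw [Matrix.det_fin_two, CharTwo.sub_eq_add, hv_add_eq _ _ hltdet, hv_mul, hg1, hg4,
      add_zero]
  have hdet0 : g.det ≠ 0 := hne_of_v _ 0 (by exact_mod_cast hdet)
  have hdeti : v (g.det)⁻¹ = 0 := by
    have := hvinv _ 0 (by exact_mod_cast hdet)
    simpa using this
  -- the two power atoms
  have hS0 : π ^ ((d + 1) / 2 + (n + 1) / 2 : ℤ) ≠ 0 := zpow_ne_zero _ hπ0
  have hT0 : π ^ ((d + 1) / 2 + n / 2 : ℤ) ≠ 0 := zpow_ne_zero _ hπ0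
  refine ⟨hu,
    (B + π ^ ((d + 1) / 2 + n / 2 : ℤ) * π ^ ((d + 1) / 2 + (n + 1) / 2 : ℤ) * g 0 1 *
        (g 0 1 * a + g 0 0)⁻¹) *
      ((g 0 1 * a + g 0 0) * (g 0 1 * a + g 0 0)) * (g.det)⁻¹,
    (g 0 1 * a + g 0 0) * D, ?_, ?_, 1, ?_, ?_⟩
  · -- 1 ≤ v B'
    have hT1 : (1 : WithTop ℤ) ≤ ((((d + 1) / 2 + n / 2 : ℤ)) : WithTop ℤ) := by
      exact_mod_cast (by omega : (1 : ℤ) ≤ (d + 1) / 2 + n / 2)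
    have hSnn : (0 : WithTop ℤ) ≤ ((((d + 1) / 2 + (n + 1) / 2 : ℤ)) : WithTop ℤ) := by
      exact_mod_cast (by omega : (0 : ℤ) ≤ (d + 1) / 2 + (n + 1) / 2)
    have ht1 : (1 : WithTop ℤ) ≤
        v (π ^ ((d + 1) / 2 + n / 2 : ℤ) * π ^ ((d + 1) / 2 + (n + 1) / 2 : ℤ) * g 0 1 *
          (g 0 1 * a + g 0 0)⁻¹) := by
      rw [hv_mul, hv_mul, hv_mul, hzpow, hzpow, hui, add_zero]
      calc (1 : WithTop ℤ) = 1 + 0 + 0 := by norm_num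
      _ ≤ _ := add_le_add (add_le_add hT1 hSnn) hg2
    have hsum : (1 : WithTop ℤ) ≤ v (B + π ^ ((d + 1) / 2 + n / 2 : ℤ) *
        π ^ ((d + 1) / 2 + (n + 1) / 2 : ℤ) * g 0 1 * (g 0 1 * a + g 0 0)⁻¹) :=
      le_trans (le_min hB ht1) (hv_add _ _)
    rw [hv_mul, hv_mul, hv_mul, hu, hdeti, add_zero, add_zero, add_zero]
    exact hsum
  · -- v D' = 0
    rw [hv_mul, hu, hD, add_zero]
  · -- 1 ∈ IEr v (2 * m + 1)
    have hv0 : v 0 = ⊤ := (hv_top 0).mpr rfl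
    refine ⟨?_, ?_, ?_, ?_⟩ <;>
      simp [Matrix.one_apply, hv0]
  · -- the matrix identity
    subst hx
    rw [mul_one]
    have hdet0' : g 0 0 * g 1 1 - g 0 1 * g 1 0 ≠ 0 := by
      rw [← Matrix.det_fin_two]; exact hdet0
    have e1 : g.det = g 0 0 * g 1 1 - g 0 1 * g 1 0 := Matrix.det_fin_two g
    rw [e1]
    simp only [em, vdot, e0, _root_.zpow_neg]
    set Z := π ^ ((d + 1) / 2 + (n + 1) / 2 : ℤ) with hZdef
    set Y := π ^ ((d + 1) / 2 + n / 2 : ℤ) with hYdef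
    set u := g 0 1 * a + g 0 0 with hudef
    set G := g 0 0 * g 1 1 - g 0 1 * g 1 0 with hGdef
    have hgmat : g = !![g 0 0, g 0 1; g 1 0, g 1 1] := by
      ext i k; fin_cases i <;> fin_cases k <;> rfl
    rw [hgmat]
    simp only [Matrix.mul_fin_two]
    ext i k
    fin_cases i <;> fin_cases k <;>
      simp only [Matrix.cons_val', Matrix.cons_val_zero, Matrix.cons_val_one,
        Matrix.head_cons, Matrix.empty_val', Matrix.cons_val_fin_one,
        Matrix.head_fin_const, Fin.isValue, Fin.zero_eta, Fin.mk_one, Matrix.of_apply] <;>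
      field_simp <;>
      ring

end ADLV
end
end
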